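/- arXiv:0912.0223 — 2 statements merged into one kernel-verified Lean document; each statement's English description precedes it below -/
import Mathlib

section
/- (Lower bounds for the radial Dirichlet eigenvalue.) Fix ρ > 0, δ > 0 and an integer k ≥ 1. Let λ ∈ ℝ and let φ : ℝ → ℝ be continuous on [0, δ], twice differentiable on (0, δ), with φ(0) = 1, φ(δ) = 0, and φ''(r) + (k/ρ)·coth(r/ρ)·φ'(r) + λ·φ(r) = 0 for all r ∈ (0, δ). Then λ > k²/(4ρ²) + (π/(2δ))². Moreover, if k ≥ 3, then λ > k²/(4ρ²) + (π/δ)². -/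
set_option maxHeartbeats 1000000

open MeasureTheory Real

open Set in

lemma sinh_le_self_mul_cosh {t : ℝ} (ht : 0 ≤ t) : Real.sinh t ≤ t * Real.cosh t := by
  have key : ∀ x : ℝ, HasDerivAt (fun y => y * Real.cosh y - Real.sinh y) (x * Real.sinh x) x := by
    intro x
    have h1 : HasDerivAt (fun y : ℝ => y * Real.cosh y) (1 * Real.cosh x + x * Real.sinh x) x :=
      (hasDerivAt_id x).mul (Real.hasDerivAt_cosh x)
    have h2 := h1.fun_sub (Real.hasDerivAt_sinh x)
    exact h2.congr_deriv (by ring)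
  have mono : MonotoneOn (fun y => y * Real.cosh y - Real.sinh y) (Set.Icc 0 t) := by
    apply monotoneOn_of_deriv_nonneg (convex_Icc 0 t)
    · exact Continuous.continuousOn (by continuity)
    · intro x hx
      exact ((key x).differentiableAt).differentiableWithinAt
    · intro x hx
      rw [interior_Icc] at hx
      rw [(key x).deriv]
      have : 0 ≤ Real.sinh x := by
        rw [← Real.sinh_zero]
        exact Real.sinh_le_sinh.2 hx.1.le
      exact mul_nonneg hx.1.le this
  have := mono (Set.left_mem_Icc.2 ht) (Set.right_mem_Icc.2 ht) ht
  simp at this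
  linarith

/-- Core Sturm-type comparison lemma. -/
lemma sturm_core (ρ δ : ℝ) (hρ : 0 < ρ) (hδ : 0 < δ) (k : ℕ) (hk : 1 ≤ k)
    (lam : ℝ) (φ : ℝ → ℝ)
    (hc : ContinuousOn φ (Set.Icc 0 δ))
    (hd : ∀ r ∈ Set.Ioo (0 : ℝ) δ,
      DifferentiableAt ℝ φ r ∧ DifferentiableAt ℝ (deriv φ) r)
    (h0 : φ 0 = 1) (hδ0 : φ δ = 0)
    (heq : ∀ r ∈ Set.Ioo (0 : ℝ) δ,
      deriv (deriv φ) r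
        + ((k : ℝ) / ρ) * (Real.cosh (r / ρ) / Real.sinh (r / ρ)) * deriv φ r
        + lam * φ r = 0)
    (B : ℝ) (f f₁ f₂ : ℝ → ℝ)
    (hfd : ∀ r ∈ Set.Ioo (0:ℝ) δ, HasDerivAt f (f₁ r) r ∧ HasDerivAt f₁ (f₂ r) r)
    (hfc1 : ∀ a ∈ Set.Ioo (0:ℝ) δ, ContinuousOn f₁ (Set.Icc a δ))
    (hfpos : ∀ r ∈ Set.Ioo (0:ℝ) δ, 0 < f r)
    (hfneg : ∀ r ∈ Set.Ioo (0:ℝ) δ, f₁ r ≤ 0)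
    (hstrict : ∀ r ∈ Set.Ioo (0:ℝ) δ,
        f₂ r + ((k:ℝ)/ρ) * (Real.cosh (r/ρ)/Real.sinh (r/ρ)) * f₁ r + B * f r < 0)
    (hsf : ∃ ra ∈ Set.Ioo (0:ℝ) δ, ∃ C₁ > (0:ℝ), ∀ r ∈ Set.Ioo (0:ℝ) ra,
        Real.sinh (r/ρ)^k * f r ≤ C₁ * r) :
    B < lam := by
  by_contra hcon
  push_neg at hcon
  obtain ⟨M, hM⟩ := (isCompact_Icc).exists_bound_of_continuousOn hc
  have hM0 : (1:ℝ) ≤ M := by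
    have := hM 0 ⟨le_refl 0, hδ.le⟩
    rw [h0] at this; simpa using this
  have hs_pos : ∀ r : ℝ, 0 < r → 0 < Real.sinh (r/ρ) := fun r hr => by
    rw [← Real.sinh_zero]
    exact Real.sinh_lt_sinh.2 (div_pos hr hρ)
  set Z : Set ℝ := Set.Icc 0 δ ∩ φ ⁻¹' {0} with hZdef
  have hZclosed : IsClosed Z := hc.preimage_isClosed_of_isClosed isClosed_Icc isClosed_singleton
  have hZne : Z.Nonempty := ⟨δ, ⟨⟨hδ.le, le_refl δ⟩, by simpa using hδ0⟩⟩
  have hZbdd : BddBelow Z := ⟨0, fun x hx => hx.1.1⟩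
  set r₀ := sInf Z with hr₀def
  have hr₀Z : r₀ ∈ Z := hZclosed.csInf_mem hZne hZbdd
  have hφr₀ : φ r₀ = 0 := hr₀Z.2
  have hr₀δ : r₀ ≤ δ := hr₀Z.1.2
  have hr₀pos : 0 < r₀ := by
    rcases eq_or_lt_of_le hr₀Z.1.1 with h | h
    · exfalso; rw [← h] at hφr₀; rw [h0] at hφr₀; norm_num at hφr₀
    · exact h
  have hφpos : ∀ x ∈ Set.Ico 0 r₀, 0 < φ x := by
    intro x hx
    rcases lt_trichotomy (φ x) 0 with hlt | heq0 | hgt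
    · exfalso
      have hsub : Set.Icc 0 x ⊆ Set.Icc 0 δ :=
        Set.Icc_subset_Icc (le_refl 0) (hx.2.le.trans hr₀δ)
      have h0mem : (0:ℝ) ∈ Set.Icc (φ x) (φ 0) := ⟨hlt.le, by rw [h0]; norm_num⟩
      obtain ⟨z, hz, hφz⟩ := intermediate_value_Icc' hx.1 (hc.mono hsub) h0mem
      have hzZ : z ∈ Z := ⟨⟨hz.1, hz.2.trans (hx.2.le.trans hr₀δ)⟩, by simpa using hφz⟩
      have h1 : r₀ ≤ x := (csInf_le hZbdd hzZ).trans hz.2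
      exact absurd hx.2 (not_lt.2 h1)
    · exfalso
      have hxZ : x ∈ Z := ⟨⟨hx.1, hx.2.le.trans hr₀δ⟩, by simpa using heq0⟩
      exact absurd hx.2 (not_lt.2 (csInf_le hZbdd hxZ))
    · exact hgt
  set s : ℝ → ℝ := fun r => Real.sinh (r/ρ) with hsdef
  set W : ℝ → ℝ := fun r => s r ^ k * (deriv φ r * f r - φ r * f₁ r) with hWdef
  set G : ℝ → ℝ := fun r => s r ^ k * φ r *
      (-(f₂ r + ((k:ℝ)/ρ) * (Real.cosh (r/ρ)/ s r) * f₁ r + lam * f r)) with hGdef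
  obtain ⟨m, rfl⟩ : ∃ m, k = m + 1 := ⟨k - 1, (Nat.succ_pred_eq_of_pos hk).symm⟩
  have hW : ∀ r ∈ Set.Ioo (0:ℝ) δ, HasDerivAt W (G r) r := by
    intro r hr
    have hsne : s r ≠ 0 := (hs_pos r hr.1).ne'
    have hsd : HasDerivAt s (Real.cosh (r/ρ) * (1/ρ)) r := by
      have h1 : HasDerivAt (fun x : ℝ => x/ρ) (1/ρ) r := (hasDerivAt_id r).div_const ρ
      exact (Real.hasDerivAt_sinh (r/ρ)).comp r h1
    have hsk : HasDerivAt (fun x => s x ^ (m+1))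
        ((m+1 : ℕ) * s r ^ m * (Real.cosh (r/ρ) * (1/ρ))) r := by
      have := hsd.fun_pow (m+1)
      simpa using this
    have hφ' : HasDerivAt φ (deriv φ r) r := (hd r hr).1.hasDerivAt
    have hφ'' : HasDerivAt (deriv φ) (deriv (deriv φ) r) r := (hd r hr).2.hasDerivAt
    have hf1 := (hfd r hr).1
    have hf2 := (hfd r hr).2
    have hA : HasDerivAt (fun x => deriv φ x * f x - φ x * f₁ x)
        ((deriv (deriv φ) r * f r + deriv φ r * f₁ r) - (deriv φ r * f₁ r + φ r * f₂ r)) r :=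
      (hφ''.mul hf1).sub (hφ'.mul hf2)
    have hcomb := hsk.fun_mul hA
    have hdd : deriv (deriv φ) r
        = -(((m+1 : ℕ) : ℝ)/ρ * (Real.cosh (r/ρ)/ s r) * deriv φ r + lam * φ r) := by
      have := heq r hr
      simp only [hsdef] at *
      linarith
    refine hcomb.congr_deriv (Eq.symm ?_)
    rw [hdd]
    simp only [hGdef]
    field_simp
    ring
  have hIoosub : Set.Ioo 0 r₀ ⊆ Set.Ioo 0 δ := Set.Ioo_subset_Ioo (le_refl 0) hr₀δ
  have hGpos : ∀ r ∈ Set.Ioo (0:ℝ) r₀, 0 < G r := by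
    intro r hr
    have hrδ := hIoosub hr
    have hfr := hfpos r hrδ
    have hneg : f₂ r + ((m+1:ℕ):ℝ)/ρ * (Real.cosh (r/ρ)/ s r) * f₁ r + lam * f r < 0 := by
      have h1 := hstrict r hrδ
      have h2 : lam * f r ≤ B * f r := mul_le_mul_of_nonneg_right hcon hfr.le
      simp only [hsdef] at h1 ⊢
      nlinarith [h1]
    have hφr := hφpos r ⟨hr.1.le, hr.2⟩
    have hskp : 0 < s r ^ (m+1) := pow_pos (hs_pos r hr.1) _
    simp only [hGdef]
    have h3 : 0 < -(f₂ r + ((m+1:ℕ):ℝ)/ρ * (Real.cosh (r/ρ)/ s r) * f₁ r + lam * f r) := by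
      linarith
    positivity
  have hWmono : ∀ a b : ℝ, a ∈ Set.Ioo (0:ℝ) r₀ → b ∈ Set.Ioo (0:ℝ) r₀ → a < b → W a < W b := by
    intro a b ha hb hab
    have hsub : Set.Icc a b ⊆ Set.Ioo (0:ℝ) δ := fun x hx =>
      ⟨lt_of_lt_of_le ha.1 hx.1, lt_of_le_of_lt hx.2 (hb.2.trans_le hr₀δ)⟩
    have hcont : ContinuousOn W (Set.Icc a b) := fun x hx =>
      ((hW x (hsub hx)).continuousAt).continuousWithinAt
    obtain ⟨u, hu, hueq⟩ := exists_hasDerivAt_eq_slope W G hab hcont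
      (fun x hx => hW x (hsub ⟨hx.1.le, hx.2.le⟩))
    have hcmem : u ∈ Set.Ioo (0:ℝ) r₀ := ⟨lt_trans ha.1 hu.1, lt_trans hu.2 hb.2⟩
    have h1 := hGpos u hcmem
    rw [hueq] at h1
    have h2 := mul_pos h1 (sub_pos.2 hab)
    rw [div_mul_cancel₀ _ (sub_pos.2 hab).ne'] at h2
    linarith
  -- Step 1: some point where W > 0
  have hstep1 : ∃ r₁ ∈ Set.Ioo (0:ℝ) r₀, 0 < W r₁ := by
    by_contra hno
    push_neg at hno
    obtain ⟨ra, hra, C₁, hC₁, hsfb⟩ := hsf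
    set z := min (r₀/2) ra with hzdef
    have hz0 : 0 < z := lt_min (by linarith) hra.1
    have hzra : z ≤ ra := min_le_right _ _
    have hzr₀ : z < r₀ := lt_of_le_of_lt (min_le_left _ _) (by linarith)
    have hmem1 : z/2 ∈ Set.Ioo (0:ℝ) r₀ := ⟨by linarith, by linarith⟩
    have hmem2 : 3*z/4 ∈ Set.Ioo (0:ℝ) r₀ := ⟨by linarith, by linarith⟩
    have hWz2 : W (z/2) < 0 :=
      lt_of_lt_of_le (hWmono _ _ hmem1 hmem2 (by linarith)) (hno _ hmem2)
    set c := -W (z/2) with hcdef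
    have hcpos : 0 < c := by simp only [hcdef]; linarith
    have hderiv_bd : ∀ r ∈ Set.Ioo (0:ℝ) (z/2), deriv φ r ≤ -(c/C₁) * (1/r) := by
      intro r hr
      have hrr₀ : r ∈ Set.Ioo (0:ℝ) r₀ := ⟨hr.1, by linarith [hr.2]⟩
      have hrδ := hIoosub hrr₀
      have hWr : W r ≤ -c := by
        have := hWmono r (z/2) hrr₀ hmem1 hr.2
        simp only [hcdef]; linarith
      have hskpos : 0 < s r ^ (m+1) := pow_pos (hs_pos r hr.1) _
      have hfr := hfpos r hrδ
      have hf1r := hfneg r hrδ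
      have hφr := hφpos r ⟨hr.1.le, hrr₀.2⟩
      have h1 : deriv φ r * f r * s r ^ (m+1) ≤ -c := by
        have h0' : s r ^ (m+1) * (deriv φ r * f r - φ r * f₁ r) ≤ -c := hWr
        nlinarith [mul_nonneg (mul_nonneg hφr.le (neg_nonneg.2 hf1r)) hskpos.le]
      have hsfr : s r ^ (m+1) * f r ≤ C₁ * r :=
        hsfb r ⟨hr.1, lt_of_lt_of_le hr.2 (by linarith)⟩
      have hsfpos : 0 < s r ^ (m+1) * f r := mul_pos hskpos hfr
      have h2 : deriv φ r ≤ -c / (s r ^ (m+1) * f r) := by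
        rw [le_div_iff₀ hsfpos]
        nlinarith [h1]
      have h3 : -c / (s r ^ (m+1) * f r) ≤ -c / (C₁ * r) := by
        have h4 : c / (C₁ * r) ≤ c / (s r ^ (m+1) * f r) :=
          div_le_div_of_nonneg_left hcpos.le hsfpos hsfr
        have h5 := neg_le_neg h4
        rw [← neg_div, ← neg_div] at h5
        exact h5
      calc deriv φ r ≤ -c / (s r ^ (m+1) * f r) := h2
        _ ≤ -c / (C₁ * r) := h3
        _ = -(c/C₁) * (1/r) := by field_simp
    set b := z/4 with hbdef
    have hb0 : 0 < b := by simp only [hbdef]; linarith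
    have hbz2 : b < z/2 := by simp only [hbdef]; linarith
    set X := (C₁/c) * (2*M+1) with hXdef
    have hXpos : 0 < X := by
      apply mul_pos (div_pos hC₁ hcpos); linarith
    set a := b * Real.exp (-X) with hadef
    have ha0 : 0 < a := mul_pos hb0 (Real.exp_pos _)
    have hab : a < b := by
      have h1 : Real.exp (-X) < 1 := Real.exp_lt_one_iff.2 (by linarith)
      calc a = b * Real.exp (-X) := rfl
        _ < b * 1 := by exact mul_lt_mul_of_pos_left h1 hb0
        _ = b := mul_one b
    have hsubab : ∀ x ∈ Set.Icc a b, x ∈ Set.Ioo (0:ℝ) (z/2) := fun x hx =>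
      ⟨lt_of_lt_of_le ha0 hx.1, lt_of_le_of_lt hx.2 hbz2⟩
    have hsubr₀ : ∀ x ∈ Set.Icc a b, x ∈ Set.Ioo (0:ℝ) r₀ := fun x hx =>
      ⟨(hsubab x hx).1, by have := (hsubab x hx).2; linarith⟩
    have hdiff : ∀ x ∈ Set.uIcc a b, DifferentiableAt ℝ φ x := by
      intro x hx
      rw [Set.uIcc_of_le hab.le] at hx
      exact (hd x (hIoosub (hsubr₀ x hx))).1
    have hcontd : ContinuousOn (deriv φ) (Set.Icc a b) := fun x hx =>
      ((hd x (hIoosub (hsubr₀ x hx))).2.continuousAt).continuousWithinAt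
    have hint : IntervalIntegrable (deriv φ) volume a b :=
      hcontd.intervalIntegrable_of_Icc hab.le
    have hftc : ∫ y in a..b, deriv φ y = φ b - φ a :=
      intervalIntegral.integral_deriv_eq_sub hdiff hint
    have hgcont : ContinuousOn (fun r : ℝ => -(c/C₁) * (1/r)) (Set.Icc a b) := by
      apply ContinuousOn.mul continuousOn_const
      apply ContinuousOn.div continuousOn_const continuousOn_id
      intro x hx
      exact (lt_of_lt_of_le ha0 hx.1).ne'
    have hgint : IntervalIntegrable (fun r : ℝ => -(c/C₁) * (1/r)) volume a b :=
      hgcont.intervalIntegrable_of_Icc hab.le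
    have hmono2 := intervalIntegral.integral_mono_on hab.le hint hgint
      (fun x hx => hderiv_bd x (hsubab x hx))
    have hba : b / a = Real.exp X := by
      rw [hadef, Real.exp_neg]
      field_simp
    have hcalc : ∫ x in a..b, -(c/C₁) * (1/x) = -(c/C₁) * X := by
      rw [intervalIntegral.integral_const_mul, integral_one_div_of_pos ha0 hb0, hba,
        Real.log_exp]
    have hkey : φ b - φ a ≤ -(2*M+1) := by
      have e1 : φ b - φ a ≤ -(c/C₁) * X := by
        rw [← hftc, ← hcalc]; exact hmono2
      have e2 : -(c/C₁) * X = -(2*M+1) := by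
        rw [hXdef]; field_simp
      linarith
    have hφa := hM a ⟨ha0.le, by
      have : b < r₀ := by linarith
      linarith [hab.le, hr₀δ]⟩
    have hφb := hM b ⟨hb0.le, by
      have : b < r₀ := by linarith
      linarith [hr₀δ]⟩
    rw [Real.norm_eq_abs] at hφa hφb
    have h5 : φ a ≤ M := le_trans (le_abs_self _) hφa
    have h6 : -M ≤ φ b := (abs_le.1 hφb).1
    linarith
  -- Main contradiction
  obtain ⟨r₁, hr₁, hWr₁⟩ := hstep1
  set c := W r₁ with hcdef
  have hr₁δ : r₁ ∈ Set.Ioo (0:ℝ) δ := hIoosub hr₁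
  obtain ⟨C₂', hC₂'⟩ := (isCompact_Icc).exists_bound_of_continuousOn (hfc1 r₁ hr₁δ)
  set C₂ := max C₂' 1 with hC₂def
  have hC₂pos : (0:ℝ) < C₂ := lt_of_lt_of_le one_pos (le_max_right _ _)
  have hC₂b : ∀ x ∈ Set.Icc r₁ δ, |f₁ x| ≤ C₂ := fun x hx =>
    le_trans (by simpa using hC₂' x hx) (le_max_left _ _)
  set sδk := Real.sinh (δ/ρ) ^ (m+1) with hsδkdef
  have hsδkpos : 0 < sδk := pow_pos (hs_pos δ hδ) _
  set ε := c / (2 * sδk * C₂) with hεdef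
  have hεpos : 0 < ε := by
    apply div_pos hWr₁
    positivity
  have hcw : ContinuousWithinAt φ (Set.Icc 0 δ) r₀ := hc r₀ ⟨hr₀pos.le, hr₀δ⟩
  obtain ⟨η, hη, hηprop⟩ := Metric.continuousWithinAt_iff.1 hcw ε hεpos
  set r₂ := max ((r₁+r₀)/2) (r₀ - η/2) with hr₂def
  have hr₂lt : r₂ < r₀ := max_lt (by linarith [hr₁.2]) (by linarith)
  have hr₂gt : r₁ < r₂ := lt_of_lt_of_le (by linarith [hr₁.2]) (le_max_left _ _)
  have hr₂pos : 0 < r₂ := lt_trans hr₁.1 hr₂gt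
  have hφsmall : ∀ r ∈ Set.Ico r₂ r₀, |φ r| < ε := by
    intro r hr
    have hrIcc : r ∈ Set.Icc 0 δ :=
      ⟨le_of_lt (lt_of_lt_of_le hr₂pos hr.1), le_trans hr.2.le hr₀δ⟩
    have hdist : dist r r₀ < η := by
      rw [Real.dist_eq, abs_of_nonpos (by linarith [hr.2])]
      have h1 : r₀ - η/2 ≤ r₂ := le_max_right _ _
      linarith [hr.1]
    have := hηprop hrIcc hdist
    rwa [Real.dist_eq, hφr₀, sub_zero] at this
  have hεC₂ : ε * C₂ = c / (2 * sδk) := by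
    rw [hεdef]; field_simp
  have hdpos : ∀ r ∈ Set.Ioo r₂ r₀, 0 < deriv φ r := by
    intro r hr
    have hrr₀ : r ∈ Set.Ioo (0:ℝ) r₀ := ⟨lt_trans hr₂pos hr.1, hr.2⟩
    have hrδ := hIoosub hrr₀
    have hWr : c ≤ W r := le_of_lt (hWmono r₁ r hr₁ hrr₀ (lt_trans hr₂gt hr.1))
    have hskpos : 0 < s r ^ (m+1) := pow_pos (hs_pos r hrr₀.1) _
    have hskle : s r ^ (m+1) ≤ sδk := by
      apply pow_le_pow_left₀ (hs_pos r hrr₀.1).le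
      exact Real.sinh_le_sinh.2 ((div_le_div_iff_of_pos_right hρ).2 hrδ.2.le)
    have hfr := hfpos r hrδ
    have hf1b : |f₁ r| ≤ C₂ := hC₂b r
      ⟨le_of_lt (lt_trans hr₂gt hr.1), le_of_lt (lt_of_lt_of_le hr.2 hr₀δ)⟩
    have hφb : |φ r| < ε := hφsmall r ⟨hr.1.le, hr.2⟩
    have e1 : c ≤ s r ^ (m+1) * (deriv φ r * f r - φ r * f₁ r) := hWr
    have e2 : c / sδk ≤ deriv φ r * f r - φ r * f₁ r := by
      rw [div_le_iff₀ hsδkpos]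
      nlinarith [hWr₁]
    have e3 : -(ε * C₂) ≤ φ r * f₁ r := by
      have h1 : |φ r * f₁ r| ≤ ε * C₂ := by
        rw [abs_mul]
        exact mul_le_mul hφb.le hf1b (abs_nonneg _) hεpos.le
      linarith [neg_abs_le (φ r * f₁ r)]
    have e4 : 0 < deriv φ r * f r := by
      have : c / (2*sδk) ≤ deriv φ r * f r := by
        have h1 : c/sδk - ε * C₂ ≤ deriv φ r * f r := by linarith
        rw [hεC₂] at h1
        have : c/sδk = 2 * (c/(2*sδk)) := by field_simp
        linarith
      have h2 : 0 < c/(2*sδk) := by positivity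
      linarith
    nlinarith [hfr]
  have hsm : StrictMonoOn φ (Set.Icc r₂ r₀) := by
    apply strictMonoOn_of_deriv_pos (convex_Icc _ _)
    · exact hc.mono (Set.Icc_subset_Icc hr₂pos.le hr₀δ)
    · intro x hx; rw [interior_Icc] at hx; exact hdpos x hx
  have h1 := hsm (Set.left_mem_Icc.2 hr₂lt.le) (Set.right_mem_Icc.2 hr₂lt.le) hr₂lt
  rw [hφr₀] at h1
  have h2 := hφpos r₂ ⟨hr₂pos.le, hr₂lt⟩
  linarith

lemma case1 (ρ δ : ℝ) (hρ : 0 < ρ) (hδ : 0 < δ) (k : ℕ) (hk : 1 ≤ k)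
    (lam : ℝ) (φ : ℝ → ℝ)
    (hc : ContinuousOn φ (Set.Icc 0 δ))
    (hd : ∀ r ∈ Set.Ioo (0 : ℝ) δ,
      DifferentiableAt ℝ φ r ∧ DifferentiableAt ℝ (deriv φ) r)
    (h0 : φ 0 = 1) (hδ0 : φ δ = 0)
    (heq : ∀ r ∈ Set.Ioo (0 : ℝ) δ,
      deriv (deriv φ) r
        + ((k : ℝ) / ρ) * (Real.cosh (r / ρ) / Real.sinh (r / ρ)) * deriv φ r
        + lam * φ r = 0) :
    (k : ℝ) ^ 2 / (4 * ρ ^ 2) + (π / (2 * δ)) ^ 2 < lam := by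
  have hkR : (1:ℝ) ≤ (k:ℝ) := by exact_mod_cast hk
  set p : ℝ := -(k:ℝ)/2 with hpdef
  have hkp : (k:ℝ) = -2*p := by rw [hpdef]; ring
  set ω : ℝ := π/(2*δ) with hωdef
  have hωpos : 0 < ω := div_pos Real.pi_pos (by linarith)
  have hωr2 : ∀ r : ℝ, r < δ → ω*r < π/2 := by
    intro r hr
    rw [hωdef]
    calc π/(2*δ)*r < π/(2*δ)*δ := by
          apply mul_lt_mul_of_pos_left hr (div_pos Real.pi_pos (by linarith))
      _ = π/2 := by field_simp
  set D : ℝ → ℝ := fun x => p * Real.sinh (x/ρ)^(p-1) * (Real.cosh (x/ρ)*(1/ρ)) with hDdef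
  set D₂ : ℝ → ℝ := fun x =>
      (p * ((p-1) * Real.sinh (x/ρ)^(p-1-1) * (Real.cosh (x/ρ)*(1/ρ)))) * (Real.cosh (x/ρ)*(1/ρ))
      + (p * Real.sinh (x/ρ)^(p-1)) * (Real.sinh (x/ρ)*(1/ρ)*(1/ρ)) with hD₂def
  set U : ℝ → ℝ := fun x => Real.sqrt x * Real.cos (ω*x) with hUdef
  set U₁ : ℝ → ℝ := fun x => 1/(2*Real.sqrt x) * Real.cos (ω*x)
      + Real.sqrt x * (-Real.sin (ω*x)*ω) with hU₁def
  set U₂ : ℝ → ℝ := fun x =>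
      ((0 * (2*Real.sqrt x) - 1 * (2*(1/(2*Real.sqrt x))))/(2*Real.sqrt x)^2 * Real.cos (ω*x)
        + 1/(2*Real.sqrt x) * (-Real.sin (ω*x)*ω))
      + (1/(2*Real.sqrt x) * (-Real.sin (ω*x)*ω) + Real.sqrt x * (-(Real.cos (ω*x)*ω)*ω))
      with hU₂def
  set F : ℝ → ℝ := fun x => U x * Real.sinh (x/ρ)^p with hFdef
  set F₁ : ℝ → ℝ := fun x => U₁ x * Real.sinh (x/ρ)^p + U x * D x with hF₁def
  set F₂ : ℝ → ℝ := fun x =>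
      (U₂ x * Real.sinh (x/ρ)^p + U₁ x * D x) + (U₁ x * D x + U x * D₂ x) with hF₂def
  have hS0 : ∀ r : ℝ, 0 < r → 0 < Real.sinh (r/ρ) := fun r hr => by
    rw [← Real.sinh_zero]; exact Real.sinh_lt_sinh.2 (div_pos hr hρ)
  have hsinh_mono : ∀ r : ℝ, r ≤ δ → Real.sinh (r/ρ) ≤ Real.sinh (δ/ρ) := fun r hr =>
    Real.sinh_le_sinh.2 (by gcongr)
  refine sturm_core ρ δ hρ hδ k hk lam φ hc hd h0 hδ0 heq
    ((k : ℝ) ^ 2 / (4 * ρ ^ 2) + (π / (2 * δ)) ^ 2) F F₁ F₂ ?_ ?_ ?_ ?_ ?_ ?_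
  · -- derivatives
    intro r hr
    have hs0 := hS0 r hr.1
    have hw0 : 0 < Real.sqrt r := Real.sqrt_pos.2 hr.1
    have hlin : HasDerivAt (fun x : ℝ => ω*x) ω r := by
      simpa using (hasDerivAt_id r).const_mul ω
    have hsin : HasDerivAt (fun x => Real.sin (ω*x)) (Real.cos (ω*r)*ω) r :=
      (Real.hasDerivAt_sin (ω*r)).comp r hlin
    have hcos : HasDerivAt (fun x => Real.cos (ω*x)) (-Real.sin (ω*r)*ω) r :=
      (Real.hasDerivAt_cos (ω*r)).comp r hlin
    have hdiv : HasDerivAt (fun x : ℝ => x/ρ) (1/ρ) r := (hasDerivAt_id r).div_const ρ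
    have hS : HasDerivAt (fun x => Real.sinh (x/ρ)) (Real.cosh (r/ρ)*(1/ρ)) r :=
      hdiv.sinh
    have hrpow : ∀ q : ℝ, HasDerivAt (fun x => Real.sinh (x/ρ)^q)
        (q * Real.sinh (r/ρ)^(q-1) * (Real.cosh (r/ρ)*(1/ρ))) r := by
      intro q
      have h := (Real.hasDerivAt_rpow_const (x := Real.sinh (r/ρ)) (p := q)
        (Or.inl hs0.ne')).comp r hS
      simpa [mul_assoc, Function.comp_def] using h
    have hsqrt : HasDerivAt Real.sqrt (1/(2*Real.sqrt r)) r := Real.hasDerivAt_sqrt hr.1.ne'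
    have hU' : HasDerivAt U (U₁ r) r := hsqrt.mul hcos
    have hg1 : HasDerivAt (fun x => 1/(2*Real.sqrt x))
        ((0 * (2*Real.sqrt r) - 1 * (2*(1/(2*Real.sqrt r))))/(2*Real.sqrt r)^2) r :=
      (hasDerivAt_const r 1).div (hsqrt.const_mul 2) (by positivity)
    have hsinneg : HasDerivAt (fun x => -Real.sin (ω*x)*ω) (-(Real.cos (ω*r)*ω)*ω) r :=
      (hsin.neg).mul_const ω
    have hU₁' : HasDerivAt U₁ (U₂ r) r := (hg1.mul hcos).add (hsqrt.mul hsinneg)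
    have hD' : HasDerivAt D (D₂ r) r := by
      have ha : HasDerivAt (fun x => p * Real.sinh (x/ρ)^(p-1))
          (p * ((p-1) * Real.sinh (r/ρ)^(p-1-1) * (Real.cosh (r/ρ)*(1/ρ)))) r :=
        (hrpow (p-1)).const_mul p
      have hb : HasDerivAt (fun x => Real.cosh (x/ρ)*(1/ρ))
          (Real.sinh (r/ρ)*(1/ρ)*(1/ρ)) r :=
        ((Real.hasDerivAt_cosh (r/ρ)).comp r hdiv).mul_const (1/ρ)
      exact ha.mul hb
    exact ⟨hU'.mul (hrpow p), (hU₁'.mul (hrpow p)).add (hU'.mul hD')⟩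
  · -- continuity of F₁ on [a, δ]
    intro a ha
    have hne : ∀ x ∈ Set.Icc a δ, Real.sinh (x/ρ) ≠ 0 := fun x hx =>
      (hS0 x (lt_of_lt_of_le ha.1 hx.1)).ne'
    have hwne : ∀ x ∈ Set.Icc a δ, 2*Real.sqrt x ≠ 0 := fun x hx => by
      have : 0 < Real.sqrt x := Real.sqrt_pos.2 (lt_of_lt_of_le ha.1 hx.1)
      positivity
    have hcs : ContinuousOn (fun x : ℝ => Real.sinh (x/ρ)) (Set.Icc a δ) :=
      (Real.continuous_sinh.comp (continuous_id.div_const ρ)).continuousOn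
    have hcc : ContinuousOn (fun x : ℝ => Real.cosh (x/ρ)) (Set.Icc a δ) :=
      (Real.continuous_cosh.comp (continuous_id.div_const ρ)).continuousOn
    have hp1 : ContinuousOn (fun x : ℝ => Real.sinh (x/ρ)^p) (Set.Icc a δ) :=
      hcs.rpow_const (fun x hx => Or.inl (hne x hx))
    have hp2 : ContinuousOn (fun x : ℝ => Real.sinh (x/ρ)^(p-1)) (Set.Icc a δ) :=
      hcs.rpow_const (fun x hx => Or.inl (hne x hx))
    have hcos : ContinuousOn (fun x : ℝ => Real.cos (ω*x)) (Set.Icc a δ) :=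
      (Real.continuous_cos.comp (continuous_const.mul continuous_id)).continuousOn
    have hsin : ContinuousOn (fun x : ℝ => Real.sin (ω*x)) (Set.Icc a δ) :=
      (Real.continuous_sin.comp (continuous_const.mul continuous_id)).continuousOn
    have hsqc : ContinuousOn Real.sqrt (Set.Icc a δ) :=
      Real.continuous_sqrt.continuousOn
    have hg1c : ContinuousOn (fun x : ℝ => 1/(2*Real.sqrt x)) (Set.Icc a δ) :=
      continuousOn_const.div (continuousOn_const.mul hsqc) hwne
    have hU₁c : ContinuousOn U₁ (Set.Icc a δ) :=
      (hg1c.mul hcos).add (hsqc.mul ((hsin.neg).mul continuousOn_const))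
    have hDc : ContinuousOn D (Set.Icc a δ) :=
      (continuousOn_const.mul hp2).mul (hcc.mul continuousOn_const)
    have hUc : ContinuousOn U (Set.Icc a δ) := hsqc.mul hcos
    exact (hU₁c.mul hp1).add (hUc.mul hDc)
  · -- positivity of F
    intro r hr
    have hs0 := hS0 r hr.1
    have hw0 : 0 < Real.sqrt r := Real.sqrt_pos.2 hr.1
    have hcos0 : 0 < Real.cos (ω*r) :=
      Real.cos_pos_of_mem_Ioo ⟨by nlinarith [mul_pos hωpos hr.1, Real.pi_pos], hωr2 r hr.2⟩
    have : 0 < U r := mul_pos hw0 hcos0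
    exact mul_pos this (Real.rpow_pos_of_pos hs0 p)
  · -- F₁ ≤ 0
    intro r hr
    have hs0 := hS0 r hr.1
    have hC0 : 0 < Real.cosh (r/ρ) := Real.cosh_pos _
    have hP0 : 0 < Real.sinh (r/ρ)^p := Real.rpow_pos_of_pos hs0 p
    have hw0 : 0 < Real.sqrt r := Real.sqrt_pos.2 hr.1
    have hw2 : Real.sqrt r ^ 2 = r := Real.sq_sqrt hr.1.le
    have hcos0 : 0 ≤ Real.cos (ω*r) :=
      le_of_lt (Real.cos_pos_of_mem_Ioo ⟨by nlinarith [mul_pos hωpos hr.1, Real.pi_pos], hωr2 r hr.2⟩)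
    have hsin0 : 0 ≤ Real.sin (ω*r) := by
      apply le_of_lt
      apply Real.sin_pos_of_pos_of_lt_pi (mul_pos hωpos hr.1)
      linarith [hωr2 r hr.2, Real.pi_pos]
    have e1 : Real.sinh (r/ρ)^(p-1) = Real.sinh (r/ρ)^p / Real.sinh (r/ρ) :=
      Real.rpow_sub_one hs0.ne' p
    have hsc : Real.sinh (r/ρ) * ρ ≤ r * Real.cosh (r/ρ) := by
      have h := sinh_le_self_mul_cosh (t := r/ρ) (le_of_lt (div_pos hr.1 hρ))
      have h2 : (r/ρ * Real.cosh (r/ρ)) * ρ = r * Real.cosh (r/ρ) := by field_simp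
      nlinarith
    have key2 : ρ*Real.sinh (r/ρ) + 2*Real.sqrt r^2*p*Real.cosh (r/ρ) ≤ 0 := by
      rw [hw2]
      have h2p : 2*p ≤ -1 := by rw [hpdef]; linarith
      nlinarith [mul_pos hr.1 hC0]
    have hiden : F₁ r = (Real.cos (ω*r)*(ρ*Real.sinh (r/ρ) + 2*Real.sqrt r^2*p*Real.cosh (r/ρ)))
          * (Real.sinh (r/ρ)^p/(2*Real.sqrt r*ρ*Real.sinh (r/ρ)))
        + (-(ω*Real.sqrt r*Real.sin (ω*r))) * Real.sinh (r/ρ)^p := by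
      simp only [hF₁def, hU₁def, hUdef, hDdef]
      rw [e1]
      field_simp
      ring
    rw [hiden]
    have t1 : (Real.cos (ω*r)*(ρ*Real.sinh (r/ρ) + 2*Real.sqrt r^2*p*Real.cosh (r/ρ)))
          * (Real.sinh (r/ρ)^p/(2*Real.sqrt r*ρ*Real.sinh (r/ρ))) ≤ 0 := by
      apply mul_nonpos_of_nonpos_of_nonneg
      · exact mul_nonpos_of_nonneg_of_nonpos hcos0 key2
      · positivity
    have t2 : (-(ω*Real.sqrt r*Real.sin (ω*r))) * Real.sinh (r/ρ)^p ≤ 0 := by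
      apply mul_nonpos_of_nonpos_of_nonneg _ hP0.le
      have : 0 ≤ ω*Real.sqrt r*Real.sin (ω*r) := by positivity
      linarith
    linarith
  · -- hstrict
    intro r hr
    have hs0 := hS0 r hr.1
    have hC0 : 0 < Real.cosh (r/ρ) := Real.cosh_pos _
    have hP0 : 0 < Real.sinh (r/ρ)^p := Real.rpow_pos_of_pos hs0 p
    have hw0 : 0 < Real.sqrt r := Real.sqrt_pos.2 hr.1
    have hw2 : Real.sqrt r ^ 2 = r := Real.sq_sqrt hr.1.le
    have hcos0 : 0 ≤ Real.cos (ω*r) :=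
      le_of_lt (Real.cos_pos_of_mem_Ioo ⟨by nlinarith [mul_pos hωpos hr.1, Real.pi_pos], hωr2 r hr.2⟩)
    have hsin0 : 0 < Real.sin (ω*r) := by
      apply Real.sin_pos_of_pos_of_lt_pi (mul_pos hωpos hr.1)
      linarith [hωr2 r hr.2, Real.pi_pos]
    have e1 : Real.sinh (r/ρ)^(p-1) = Real.sinh (r/ρ)^p / Real.sinh (r/ρ) :=
      Real.rpow_sub_one hs0.ne' p
    have e2 : Real.sinh (r/ρ)^(p-1-1) = Real.sinh (r/ρ)^p / Real.sinh (r/ρ) / Real.sinh (r/ρ) := by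
      rw [Real.rpow_sub_one hs0.ne', Real.rpow_sub_one hs0.ne']
    have hρS : r ≤ ρ * Real.sinh (r/ρ) := by
      have h := Real.self_le_sinh_iff.2 (le_of_lt (div_pos hr.1 hρ))
      calc r = (r/ρ)*ρ := by field_simp
        _ ≤ Real.sinh (r/ρ)*ρ := by nlinarith
        _ = ρ * Real.sinh (r/ρ) := by ring
    have key : F₂ r + ((k:ℝ)/ρ)*(Real.cosh (r/ρ)/Real.sinh (r/ρ))*F₁ r
        + ((k : ℝ) ^ 2 / (4 * ρ ^ 2) + (π / (2 * δ)) ^ 2) * F r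
        = Real.sinh (r/ρ)^p *
          ( -(Real.cos (ω*r) * (ρ^2*Real.sinh (r/ρ)^2 + 4*Real.sqrt r^4*(p*(p+1))))
              /(4*Real.sqrt r^3*ρ^2*Real.sinh (r/ρ)^2)
            - ω*Real.sin (ω*r)/Real.sqrt r ) := by
      simp only [hF₂def, hF₁def, hFdef, hDdef, hD₂def, hU₂def, hU₁def, hUdef]
      rw [e2, e1, hkp, ← hωdef]
      have hrw : r = Real.sqrt r^2 := hw2.symm
      rw [hrw]
      field_simp
      ring_nf
      have hC2' : Real.cosh (Real.sqrt r ^ 2 * ρ⁻¹)^2 = Real.sinh (Real.sqrt r ^ 2 * ρ⁻¹)^2 + 1 :=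
        Real.cosh_sq _
      rw [hC2']
      ring
    rw [key]
    have hb1 : 0 ≤ Real.cos (ω*r) * (ρ^2*Real.sinh (r/ρ)^2 + 4*Real.sqrt r^4*(p*(p+1))) := by
      apply mul_nonneg hcos0
      have hw4 : Real.sqrt r^4 = r^2 := by
        rw [show Real.sqrt r^4 = (Real.sqrt r^2)^2 by ring, hw2]
      rw [hw4]
      nlinarith [sq_nonneg (2*p+1), hρS, hr.1, hs0, sq_nonneg (ρ*Real.sinh (r/ρ) - r)]
    apply mul_neg_of_pos_of_neg hP0
    have t1 : 0 < ω*Real.sin (ω*r)/Real.sqrt r := by positivity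
    have t2 : 0 ≤ Real.cos (ω*r) * (ρ^2*Real.sinh (r/ρ)^2 + 4*Real.sqrt r^4*(p*(p+1)))
        /(4*Real.sqrt r^3*ρ^2*Real.sinh (r/ρ)^2) := by
      apply div_nonneg hb1
      positivity
    have e3 : -(Real.cos (ω*r) * (ρ^2*Real.sinh (r/ρ)^2 + 4*Real.sqrt r^4*(p*(p+1))))
              /(4*Real.sqrt r^3*ρ^2*Real.sinh (r/ρ)^2)
        = -(Real.cos (ω*r) * (ρ^2*Real.sinh (r/ρ)^2 + 4*Real.sqrt r^4*(p*(p+1)))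
              /(4*Real.sqrt r^3*ρ^2*Real.sinh (r/ρ)^2)) := by
      rw [neg_div]
    rw [e3]
    linarith
  · -- hsf
    have hmm : (0:ℝ) < max 1 (Real.sinh (δ/ρ)) := lt_of_lt_of_le one_pos (le_max_left _ _)
    set K : ℝ := Real.cosh (δ/ρ)/ρ with hKdef
    have hK0 : 0 < K := div_pos (Real.cosh_pos _) hρ
    set mmq : ℝ := (max 1 (Real.sinh (δ/ρ)))^(((k:ℝ)-1)/2) with hmmqdef
    have hmmq0 : 0 < mmq := Real.rpow_pos_of_pos hmm _
    refine ⟨δ/2, ⟨by linarith, by linarith⟩, Real.sqrt K * mmq,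
      mul_pos (Real.sqrt_pos.2 hK0) hmmq0, ?_⟩
    intro r hr
    have hs0 := hS0 r hr.1
    have hw0 : 0 < Real.sqrt r := Real.sqrt_pos.2 hr.1
    have hFval : Real.sinh (r/ρ)^k * F r
        = (Real.sqrt r * Real.cos (ω*r)) * Real.sinh (r/ρ)^((k:ℝ)/2) := by
      simp only [hFdef, hUdef]
      rw [← Real.rpow_natCast (Real.sinh (r/ρ)) k]
      rw [mul_comm (Real.sinh (r/ρ) ^ (k:ℝ)), mul_assoc, ← Real.rpow_add hs0]
      congr 1
      rw [hpdef]; congr 1; ring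
    have hsplit : Real.sinh (r/ρ)^((k:ℝ)/2)
        = Real.sinh (r/ρ)^((1:ℝ)/2) * Real.sinh (r/ρ)^(((k:ℝ)-1)/2) := by
      rw [← Real.rpow_add hs0]; congr 1; ring
    have hhalf : Real.sinh (r/ρ)^((1:ℝ)/2) = Real.sqrt (Real.sinh (r/ρ)) := by
      rw [Real.sqrt_eq_rpow]
    have hSle : Real.sinh (r/ρ) ≤ K * r := by
      have h1 := sinh_le_self_mul_cosh (t := r/ρ) (le_of_lt (div_pos hr.1 hρ))
      have h2 : Real.cosh (r/ρ) ≤ Real.cosh (δ/ρ) := by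
        rw [Real.cosh_le_cosh]
        rw [abs_of_nonneg (le_of_lt (div_pos hr.1 hρ)), abs_of_nonneg (le_of_lt (div_pos hδ hρ))]
        gcongr
        linarith [hr.2]
      calc Real.sinh (r/ρ) ≤ r/ρ * Real.cosh (r/ρ) := h1
        _ ≤ r/ρ * Real.cosh (δ/ρ) := by
            apply mul_le_mul_of_nonneg_left h2 (le_of_lt (div_pos hr.1 hρ))
        _ = K * r := by rw [hKdef]; field_simp
    have hsq_le : Real.sqrt (Real.sinh (r/ρ)) ≤ Real.sqrt K * Real.sqrt r := by
      rw [← Real.sqrt_mul hK0.le]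
      exact Real.sqrt_le_sqrt hSle
    have hq_le : Real.sinh (r/ρ)^(((k:ℝ)-1)/2) ≤ mmq := by
      apply Real.rpow_le_rpow hs0.le
      · exact le_trans (hsinh_mono r (by linarith [hr.2])) (le_max_right _ _)
      · have : (1:ℝ) ≤ (k:ℝ) := hkR
        linarith
    rw [hFval, hsplit, hhalf]
    have hA1 : Real.sqrt r * Real.cos (ω*r) ≤ Real.sqrt r := by
      nlinarith [Real.cos_le_one (ω*r), Real.sqrt_nonneg r]
    have hA2 : Real.sqrt (Real.sinh (r/ρ)) * Real.sinh (r/ρ)^(((k:ℝ)-1)/2)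
        ≤ (Real.sqrt K * Real.sqrt r) * mmq := by
      apply mul_le_mul hsq_le hq_le (Real.rpow_pos_of_pos hs0 _).le
      positivity
    have hA0 : 0 ≤ Real.sqrt (Real.sinh (r/ρ)) * Real.sinh (r/ρ)^(((k:ℝ)-1)/2) := by
      positivity
    calc Real.sqrt r * Real.cos (ω*r) * (Real.sqrt (Real.sinh (r/ρ)) * Real.sinh (r/ρ)^(((k:ℝ)-1)/2))
        ≤ Real.sqrt r * ((Real.sqrt K * Real.sqrt r) * mmq) := by
          apply mul_le_mul hA1 hA2 hA0 (Real.sqrt_nonneg r)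
      _ = Real.sqrt K * mmq * (Real.sqrt r * Real.sqrt r) := by ring
      _ = Real.sqrt K * mmq * r := by rw [Real.mul_self_sqrt hr.1.le]

lemma case2 (ρ δ : ℝ) (hρ : 0 < ρ) (hδ : 0 < δ) (k : ℕ) (hk3 : 3 ≤ k)
    (lam : ℝ) (φ : ℝ → ℝ)
    (hc : ContinuousOn φ (Set.Icc 0 δ))
    (hd : ∀ r ∈ Set.Ioo (0 : ℝ) δ,
      DifferentiableAt ℝ φ r ∧ DifferentiableAt ℝ (deriv φ) r)
    (h0 : φ 0 = 1) (hδ0 : φ δ = 0)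
    (heq : ∀ r ∈ Set.Ioo (0 : ℝ) δ,
      deriv (deriv φ) r
        + ((k : ℝ) / ρ) * (Real.cosh (r / ρ) / Real.sinh (r / ρ)) * deriv φ r
        + lam * φ r = 0) :
    (k : ℝ) ^ 2 / (4 * ρ ^ 2) + (π / δ) ^ 2 < lam := by
  have hk1 : 1 ≤ k := le_trans (by norm_num) hk3
  have hkR : (3:ℝ) ≤ (k:ℝ) := by exact_mod_cast hk3
  set p : ℝ := -(k:ℝ)/2 with hpdef
  have hkp : (k:ℝ) = -2*p := by rw [hpdef]; ring
  set q1 : ℝ := π/δ with hq1def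
  have hq1pos : 0 < q1 := div_pos Real.pi_pos hδ
  set D : ℝ → ℝ := fun x => p * Real.sinh (x/ρ)^(p-1) * (Real.cosh (x/ρ)*(1/ρ)) with hDdef
  set D₂ : ℝ → ℝ := fun x =>
      (p * ((p-1) * Real.sinh (x/ρ)^(p-1-1) * (Real.cosh (x/ρ)*(1/ρ)))) * (Real.cosh (x/ρ)*(1/ρ))
      + (p * Real.sinh (x/ρ)^(p-1)) * (Real.sinh (x/ρ)*(1/ρ)*(1/ρ)) with hD₂def
  set F : ℝ → ℝ := fun x => Real.sin (q1*x) * Real.sinh (x/ρ)^p with hFdef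
  set F₁ : ℝ → ℝ := fun x => Real.cos (q1*x)*q1 * Real.sinh (x/ρ)^p + Real.sin (q1*x) * D x
    with hF₁def
  set F₂ : ℝ → ℝ := fun x =>
      (-Real.sin (q1*x)*q1*q1 * Real.sinh (x/ρ)^p + Real.cos (q1*x)*q1 * D x)
      + (Real.cos (q1*x)*q1 * D x + Real.sin (q1*x) * D₂ x) with hF₂def
  -- generic facts
  have hS0 : ∀ r : ℝ, 0 < r → 0 < Real.sinh (r/ρ) := fun r hr => by
    rw [← Real.sinh_zero]; exact Real.sinh_lt_sinh.2 (div_pos hr hρ)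
  have hsinh_mono : ∀ r : ℝ, r ≤ δ → Real.sinh (r/ρ) ≤ Real.sinh (δ/ρ) := fun r hr =>
    Real.sinh_le_sinh.2 (by gcongr)
  refine sturm_core ρ δ hρ hδ k hk1 lam φ hc hd h0 hδ0 heq
    ((k : ℝ) ^ 2 / (4 * ρ ^ 2) + (π / δ) ^ 2) F F₁ F₂ ?_ ?_ ?_ ?_ ?_ ?_
  · -- derivatives
    intro r hr
    have hs0 := hS0 r hr.1
    have hlin : HasDerivAt (fun x : ℝ => q1*x) q1 r := by
      simpa using (hasDerivAt_id r).const_mul q1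
    have hsin : HasDerivAt (fun x => Real.sin (q1*x)) (Real.cos (q1*r)*q1) r :=
      (Real.hasDerivAt_sin (q1*r)).comp r hlin
    have hcos : HasDerivAt (fun x => Real.cos (q1*x)) (-Real.sin (q1*r)*q1) r :=
      (Real.hasDerivAt_cos (q1*r)).comp r hlin
    have hdiv : HasDerivAt (fun x : ℝ => x/ρ) (1/ρ) r := (hasDerivAt_id r).div_const ρ
    have hS : HasDerivAt (fun x => Real.sinh (x/ρ)) (Real.cosh (r/ρ)*(1/ρ)) r :=
      hdiv.sinh
    have hrpow : ∀ q : ℝ, HasDerivAt (fun x => Real.sinh (x/ρ)^q)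
        (q * Real.sinh (r/ρ)^(q-1) * (Real.cosh (r/ρ)*(1/ρ))) r := by
      intro q
      have h := (Real.hasDerivAt_rpow_const (x := Real.sinh (r/ρ)) (p := q)
        (Or.inl hs0.ne')).comp r hS
      simpa [mul_assoc, Function.comp_def] using h
    have hD' : HasDerivAt D (D₂ r) r := by
      have ha : HasDerivAt (fun x => p * Real.sinh (x/ρ)^(p-1))
          (p * ((p-1) * Real.sinh (r/ρ)^(p-1-1) * (Real.cosh (r/ρ)*(1/ρ)))) r :=
        (hrpow (p-1)).const_mul p
      have hb : HasDerivAt (fun x => Real.cosh (x/ρ)*(1/ρ))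
          (Real.sinh (r/ρ)*(1/ρ)*(1/ρ)) r :=
        ((Real.hasDerivAt_cosh (r/ρ)).comp r hdiv).mul_const (1/ρ)
      exact ha.mul hb
    constructor
    · exact hsin.mul (hrpow p)
    · exact ((hcos.mul_const q1).mul (hrpow p)).add (hsin.mul hD')
  · -- continuity of F₁ on [a, δ]
    intro a ha
    have hne : ∀ x ∈ Set.Icc a δ, Real.sinh (x/ρ) ≠ 0 := fun x hx =>
      (hS0 x (lt_of_lt_of_le ha.1 hx.1)).ne'
    have hcs : ContinuousOn (fun x : ℝ => Real.sinh (x/ρ)) (Set.Icc a δ) :=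
      (Real.continuous_sinh.comp (continuous_id.div_const ρ)).continuousOn
    have hcc : ContinuousOn (fun x : ℝ => Real.cosh (x/ρ)) (Set.Icc a δ) :=
      (Real.continuous_cosh.comp (continuous_id.div_const ρ)).continuousOn
    have hp1 : ContinuousOn (fun x : ℝ => Real.sinh (x/ρ)^p) (Set.Icc a δ) :=
      hcs.rpow_const (fun x hx => Or.inl (hne x hx))
    have hp2 : ContinuousOn (fun x : ℝ => Real.sinh (x/ρ)^(p-1)) (Set.Icc a δ) :=
      hcs.rpow_const (fun x hx => Or.inl (hne x hx))
    have hcos : ContinuousOn (fun x : ℝ => Real.cos (q1*x)) (Set.Icc a δ) :=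
      (Real.continuous_cos.comp (continuous_const.mul continuous_id)).continuousOn
    have hsin : ContinuousOn (fun x : ℝ => Real.sin (q1*x)) (Set.Icc a δ) :=
      (Real.continuous_sin.comp (continuous_const.mul continuous_id)).continuousOn
    exact ((hcos.mul continuousOn_const).mul hp1).add
      (hsin.mul (((continuousOn_const.mul hp2).mul (hcc.mul continuousOn_const))))
  · -- positivity of F
    intro r hr
    have hs0 := hS0 r hr.1
    have hsin0 : 0 < Real.sin (q1*r) := by
      apply Real.sin_pos_of_pos_of_lt_pi (mul_pos hq1pos hr.1)
      rw [hq1def]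
      calc π/δ*r < π/δ*δ := by
            apply mul_lt_mul_of_pos_left hr.2 (div_pos Real.pi_pos hδ)
        _ = π := by field_simp
    exact mul_pos hsin0 (Real.rpow_pos_of_pos hs0 p)
  · -- F₁ ≤ 0
    intro r hr
    have hs0 := hS0 r hr.1
    have hC0 : 0 < Real.cosh (r/ρ) := Real.cosh_pos _
    have hP0 : 0 < Real.sinh (r/ρ)^p := Real.rpow_pos_of_pos hs0 p
    have hsin0 : 0 < Real.sin (q1*r) := by
      apply Real.sin_pos_of_pos_of_lt_pi (mul_pos hq1pos hr.1)
      rw [hq1def]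
      calc π/δ*r < π/δ*δ := by
            apply mul_lt_mul_of_pos_left hr.2 (div_pos Real.pi_pos hδ)
        _ = π := by field_simp
    have hsinπ : q1*r < π := by
      rw [hq1def]
      calc π/δ*r < π/δ*δ := by
            apply mul_lt_mul_of_pos_left hr.2 (div_pos Real.pi_pos hδ)
        _ = π := by field_simp
    have e1 : Real.sinh (r/ρ)^(p-1) = Real.sinh (r/ρ)^p / Real.sinh (r/ρ) :=
      Real.rpow_sub_one hs0.ne' p
    have hsc : Real.sinh (r/ρ) * ρ ≤ r * Real.cosh (r/ρ) := by
      have h := sinh_le_self_mul_cosh (t := r/ρ) (le_of_lt (div_pos hr.1 hρ))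
      have h2 : (r/ρ * Real.cosh (r/ρ)) * ρ = r * Real.cosh (r/ρ) := by field_simp
      nlinarith
    have hp32 : p ≤ -(3/2) := by rw [hpdef]; linarith
    simp only [hF₁def, hDdef]
    rw [e1]
    have hiden : Real.cos (q1*r)*q1*Real.sinh (r/ρ)^p
        + Real.sin (q1*r) * (p * (Real.sinh (r/ρ)^p/Real.sinh (r/ρ)) * (Real.cosh (r/ρ)*(1/ρ)))
        = (Real.cos (q1*r)*q1*Real.sinh (r/ρ)*ρ + Real.sin (q1*r)*p*Real.cosh (r/ρ))
          * (Real.sinh (r/ρ)^p/(Real.sinh (r/ρ)*ρ)) := by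
      field_simp
    rw [hiden]
    have hkey : Real.cos (q1*r)*q1*Real.sinh (r/ρ)*ρ + Real.sin (q1*r)*p*Real.cosh (r/ρ) ≤ 0 := by
      rcases le_or_gt (Real.cos (q1*r)) 0 with hcos | hcos
      · nlinarith [mul_pos hsin0 hC0, mul_pos hq1pos (mul_pos hs0 hρ)]
      · have hxlt : q1*r < π/2 := by
          by_contra hcon
          push_neg at hcon
          have := Real.cos_nonpos_of_pi_div_two_le_of_le hcon (by nlinarith [Real.pi_pos])
          linarith
        have htan : q1*r < Real.tan (q1*r) := lt_tan (mul_pos hq1pos hr.1) hxlt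
        have hxcos : q1*r*Real.cos (q1*r) < Real.sin (q1*r) := by
          rw [Real.tan_eq_sin_div_cos] at htan
          exact (lt_div_iff₀ hcos).1 htan
        have k1 : Real.cos (q1*r)*q1*Real.sinh (r/ρ)*ρ ≤ q1*r*Real.cos (q1*r)*Real.cosh (r/ρ) := by
          nlinarith [mul_nonneg hcos.le hq1pos.le, hsc]
        have k2 : q1*r*Real.cos (q1*r)*Real.cosh (r/ρ) < Real.sin (q1*r)*Real.cosh (r/ρ) := by
          nlinarith [hxcos, hC0]
        have k3 : Real.sin (q1*r)*Real.cosh (r/ρ) ≤ (-p)*(Real.sin (q1*r)*Real.cosh (r/ρ)) := by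
          nlinarith [mul_pos hsin0 hC0, hp32]
        nlinarith [k1, k2, k3]
    have hfrac : (0:ℝ) < Real.sinh (r/ρ)^p/(Real.sinh (r/ρ)*ρ) := by positivity
    nlinarith [hkey, hfrac]
  · -- hstrict
    intro r hr
    have hs0 := hS0 r hr.1
    have hC0 : 0 < Real.cosh (r/ρ) := Real.cosh_pos _
    have hP0 : 0 < Real.sinh (r/ρ)^p := Real.rpow_pos_of_pos hs0 p
    have hsin0 : 0 < Real.sin (q1*r) := by
      apply Real.sin_pos_of_pos_of_lt_pi (mul_pos hq1pos hr.1)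
      rw [hq1def]
      calc π/δ*r < π/δ*δ := by
            apply mul_lt_mul_of_pos_left hr.2 (div_pos Real.pi_pos hδ)
        _ = π := by field_simp
    have e1 : Real.sinh (r/ρ)^(p-1) = Real.sinh (r/ρ)^p / Real.sinh (r/ρ) :=
      Real.rpow_sub_one hs0.ne' p
    have e2 : Real.sinh (r/ρ)^(p-1-1) = Real.sinh (r/ρ)^p / Real.sinh (r/ρ) / Real.sinh (r/ρ) := by
      rw [Real.rpow_sub_one hs0.ne', Real.rpow_sub_one hs0.ne']
    have hC2 : Real.cosh (r/ρ)^2 = Real.sinh (r/ρ)^2 + 1 := Real.cosh_sq (r/ρ)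
    have hpp : 0 < p*(p+1) := by nlinarith [hkR]
    have key : F₂ r + ((k:ℝ)/ρ)*(Real.cosh (r/ρ)/Real.sinh (r/ρ))*F₁ r
        + ((k : ℝ) ^ 2 / (4 * ρ ^ 2) + (π / δ) ^ 2) * F r
        = -(p*(p+1)) * Real.sin (q1*r) * Real.sinh (r/ρ)^p / (Real.sinh (r/ρ)^2 * ρ^2) := by
      simp only [hF₂def, hF₁def, hFdef, hDdef, hD₂def]
      rw [e2, e1, hkp, ← hq1def]
      have hq1B : (-2*p) ^ 2 / (4 * ρ ^ 2) + q1 ^ 2 = p^2/ρ^2 + q1^2 := by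
        field_simp; ring
      field_simp
      ring_nf
      have hC2' : Real.cosh (r * ρ⁻¹)^2 = Real.sinh (r * ρ⁻¹)^2 + 1 := Real.cosh_sq _
      rw [hC2']
      ring
    rw [key]
    apply div_neg_of_neg_of_pos
    · have : 0 < p*(p+1) * Real.sin (q1*r) * Real.sinh (r/ρ)^p := by positivity
      nlinarith [this]
    · positivity
  · -- hsf
    have hmm : (0:ℝ) < max 1 (Real.sinh (δ/ρ)) := lt_of_lt_of_le one_pos (le_max_left _ _)
    refine ⟨δ/2, ⟨by linarith, by linarith⟩,
      (max 1 (Real.sinh (δ/ρ)))^((k:ℝ)/2) * q1,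
      mul_pos (Real.rpow_pos_of_pos hmm _) hq1pos, ?_⟩
    intro r hr
    have hs0 := hS0 r hr.1
    have hq1r : 0 < q1*r := mul_pos hq1pos hr.1
    have hsin_le : Real.sin (q1*r) ≤ q1*r := le_of_lt (Real.sin_lt hq1r)
    have hsin_pos : 0 ≤ Real.sin (q1*r) := by
      apply le_of_lt
      apply Real.sin_pos_of_pos_of_lt_pi hq1r
      rw [hq1def]
      have : r < δ := by linarith [hr.2]
      calc π/δ*r < π/δ*δ := by
            apply mul_lt_mul_of_pos_left this (div_pos Real.pi_pos hδ)
        _ = π := by field_simp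
    have hFval : Real.sinh (r/ρ)^k * F r = Real.sin (q1*r) * Real.sinh (r/ρ)^((k:ℝ)/2) := by
      simp only [hFdef]
      rw [← Real.rpow_natCast (Real.sinh (r/ρ)) k]
      rw [mul_comm (Real.sinh (r/ρ) ^ (k:ℝ)), mul_assoc, ← Real.rpow_add hs0]
      congr 1
      rw [hpdef]; congr 1; ring
    have hrb : Real.sinh (r/ρ)^((k:ℝ)/2) ≤ (max 1 (Real.sinh (δ/ρ)))^((k:ℝ)/2) := by
      apply Real.rpow_le_rpow hs0.le
      · exact le_trans (hsinh_mono r (by linarith [hr.2])) (le_max_right _ _)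
      · positivity
    rw [hFval]
    calc Real.sin (q1*r) * Real.sinh (r/ρ)^((k:ℝ)/2)
        ≤ (q1*r) * (max 1 (Real.sinh (δ/ρ)))^((k:ℝ)/2) := by
          apply mul_le_mul hsin_le hrb (by positivity) (by positivity)
      _ = (max 1 (Real.sinh (δ/ρ)))^((k:ℝ)/2) * q1 * r := by ring


/-- Lower bounds for the radial Dirichlet eigenvalue in a hyperbolic disk of radius `δ`:
`λ > k²/(4ρ²) + (π/(2δ))²`, and `λ > k²/(4ρ²) + (π/δ)²` when `k ≥ 3`. -/
theorem dirichlet_eigenvalue_lower_bounds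
    (ρ δ : ℝ) (hρ : 0 < ρ) (hδ : 0 < δ) (k : ℕ) (hk : 1 ≤ k)
    (lam : ℝ) (φ : ℝ → ℝ)
    (hc : ContinuousOn φ (Set.Icc 0 δ))
    (hd : ∀ r ∈ Set.Ioo (0 : ℝ) δ,
      DifferentiableAt ℝ φ r ∧ DifferentiableAt ℝ (deriv φ) r)
    (h0 : φ 0 = 1) (hδ0 : φ δ = 0)
    (heq : ∀ r ∈ Set.Ioo (0 : ℝ) δ,
      deriv (deriv φ) r
        + ((k : ℝ) / ρ) * (Real.cosh (r / ρ) / Real.sinh (r / ρ)) * deriv φ r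
        + lam * φ r = 0) :
    (k : ℝ) ^ 2 / (4 * ρ ^ 2) + (π / (2 * δ)) ^ 2 < lam
    ∧ (3 ≤ k → (k : ℝ) ^ 2 / (4 * ρ ^ 2) + (π / δ) ^ 2 < lam) := by
  exact ⟨case1 ρ δ hρ hδ k hk lam φ hc hd h0 hδ0 heq,
    fun hk3 => case2 ρ δ hρ hδ k hk3 lam φ hc hd h0 hδ0 heq⟩
end

section
/- (Behavior of radial eigenfunctions at infinity.) Fix ρ > 0 and an integer k ≥ 1. Let λ ∈ ℝ and let φ : ℝ → ℝ be a normalized radial eigenfunction on [0, ∞) with eigenvalue λ. Then: if λ < 0, φ(r) tends to +∞ as r → ∞ (Tendsto φ atTop atTop); if λ = 0, φ(r) tends to 1 as r → ∞; and if λ > 0, φ(r) tends to 0 as r → ∞. -/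
open MeasureTheory Real Filter

lemma REF_sinh_le {x : ℝ} (h0 : 0 ≤ x) (h1 : x ≤ 1/2) : Real.sinh x ≤ 2*x := by
  rw [Real.sinh_eq]
  have h2 : -x + 1 ≤ Real.exp (-x) := Real.add_one_le_exp (-x)
  have h3 : 0 < Real.exp (-x) := Real.exp_pos _
  have h4 : Real.exp x * Real.exp (-x) = 1 := by rw [← Real.exp_add]; simp
  nlinarith [h2, h3, h4]

lemma REF_no_blowup (f : ℝ → ℝ) (c s1 ℓ : ℝ) (hcpos : 0 < c) (hs1 : 0 < s1)
    (hdf : ∀ s ∈ Set.Ioc (0:ℝ) s1, DifferentiableAt ℝ f s)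
    (hdc : ContinuousOn (deriv f) (Set.Ioc 0 s1))
    (hge : ∀ s ∈ Set.Ioc (0:ℝ) s1, c / s ≤ deriv f s)
    (hlim : Tendsto f (nhdsWithin (0:ℝ) (Set.Ioi 0)) (nhds ℓ)) : False := by
  have key : ∀ s ∈ Set.Ioc (0:ℝ) s1, c * Real.log (s1 / s) ≤ f s1 - f s := by
    intro s hs
    have hsub : Set.uIcc s s1 ⊆ Set.Ioc 0 s1 := by
      rw [Set.uIcc_of_le hs.2]
      exact fun t ht => ⟨lt_of_lt_of_le hs.1 ht.1, ht.2⟩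
    have hint : IntervalIntegrable (deriv f) volume s s1 :=
      (hdc.mono hsub).intervalIntegrable
    have hftc : ∫ t in s..s1, deriv f t = f s1 - f s := by
      apply intervalIntegral.integral_eq_sub_of_hasDerivAt
      · exact fun t ht => (hdf t (hsub ht)).hasDerivAt
      · exact hint
    have hcont2 : ContinuousOn (fun t : ℝ => c / t) (Set.uIcc s s1) := by
      apply ContinuousOn.div continuousOn_const continuousOn_id
      intro t ht
      exact ne_of_gt (hsub ht).1
    have hint2 : IntervalIntegrable (fun t : ℝ => c / t) volume s s1 :=
      hcont2.intervalIntegrable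
    have hmono : ∫ t in s..s1, c / t ≤ ∫ t in s..s1, deriv f t := by
      apply intervalIntegral.integral_mono_on hs.2 hint2 hint
      intro t ht
      exact hge t (hsub (by rwa [Set.uIcc_of_le hs.2]))
    have hval : ∫ t in s..s1, c / t = c * Real.log (s1 / s) := by
      have : (fun t : ℝ => c / t) = fun t : ℝ => c * (1 / t) := by funext t; ring
      rw [this, intervalIntegral.integral_const_mul, integral_one_div]
      rw [Set.uIcc_of_le hs.2]
      intro h0
      exact absurd h0.1 (not_le.2 hs.1)
    rw [← hftc, ← hval]
    exact hmono
  -- now derive contradiction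
  have h1 : ∀ᶠ s in nhdsWithin (0:ℝ) (Set.Ioi 0), f s1 - f s < f s1 - ℓ + 1 := by
    have := hlim.eventually (eventually_gt_nhds (show ℓ - 1 < ℓ by linarith))
    filter_upwards [this] with s hs
    linarith
  have h2 : Tendsto (fun s : ℝ => c * Real.log (s1 / s)) (nhdsWithin (0:ℝ) (Set.Ioi 0)) atTop := by
    apply Tendsto.const_mul_atTop hcpos
    have hneg : Tendsto (fun s : ℝ => -Real.log s) (nhdsWithin (0:ℝ) (Set.Ioi 0)) atTop :=
      tendsto_neg_atBot_atTop.comp Real.tendsto_log_nhdsGT_zero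
    have : Tendsto (fun s : ℝ => Real.log s1 - Real.log s) (nhdsWithin (0:ℝ) (Set.Ioi 0)) atTop := by
      have := tendsto_atTop_add_const_left _ (Real.log s1) hneg
      simpa [sub_eq_add_neg] using this
    apply this.congr'
    filter_upwards [self_mem_nhdsWithin] with s hs
    rw [Real.log_div (ne_of_gt hs1) (ne_of_gt hs)]
  have h3 : ∀ᶠ s in nhdsWithin (0:ℝ) (Set.Ioi 0), f s1 - ℓ + 1 < c * Real.log (s1 / s) :=
    h2.eventually_gt_atTop _
  have h4 : ∀ᶠ s in nhdsWithin (0:ℝ) (Set.Ioi 0), s ∈ Set.Ioc (0:ℝ) s1 :=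
    Ioc_mem_nhdsGT_of_mem ⟨le_refl 0, hs1⟩
  obtain ⟨s, hA, hB, hC⟩ := (h1.and (h3.and h4)).exists
  have := key s hC
  linarith

lemma REF_w_deriv (ρ : ℝ) (hρ : 0 < ρ) (k : ℕ) (hk : 1 ≤ k)
    (lam : ℝ) (φ : ℝ → ℝ)
    (hd : ∀ r : ℝ, 0 < r → DifferentiableAt ℝ φ r ∧ DifferentiableAt ℝ (deriv φ) r)
    (heq : ∀ r : ℝ, 0 < r →
      deriv (deriv φ) r
        + ((k : ℝ) / ρ) * (Real.cosh (r / ρ) / Real.sinh (r / ρ)) * deriv φ r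
        + lam * φ r = 0) :
    ∀ r : ℝ, 0 < r → HasDerivAt (fun x => (Real.sinh (x/ρ))^k * deriv φ x)
      ((Real.sinh (r/ρ))^k * (-(lam * φ r))) r := by
  obtain ⟨m, rfl⟩ : ∃ m, k = m + 1 := ⟨k - 1, (Nat.succ_pred_eq_of_pos hk).symm⟩
  intro r hr
  have hrρ : 0 < r / ρ := div_pos hr hρ
  have hSpos : 0 < Real.sinh (r/ρ) := Real.sinh_pos_iff.2 hrρ
  have hSne : Real.sinh (r/ρ) ≠ 0 := ne_of_gt hSpos
  have hS : HasDerivAt (fun x => Real.sinh (x/ρ)) (Real.cosh (r/ρ) / ρ) r := by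
    have h1 : HasDerivAt (fun x : ℝ => x / ρ) (1/ρ) r := (hasDerivAt_id r).div_const ρ
    have := (Real.hasDerivAt_sinh (r/ρ)).comp r h1
    simpa [div_eq_mul_inv, mul_comm, Function.comp_def] using this
  have hSk : HasDerivAt (fun x => (Real.sinh (x/ρ))^(m+1))
      ((m+1) * (Real.sinh (r/ρ))^m * (Real.cosh (r/ρ) / ρ)) r := by
    simpa using hS.fun_pow (m+1)
  have hD : HasDerivAt (deriv φ) (deriv (deriv φ) r) r := (hd r hr).2.hasDerivAt
  have := hSk.fun_mul hD
  refine this.congr_deriv ?_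
  have h2 : deriv (deriv φ) r
      = -((((m:ℝ)+1) / ρ) * (Real.cosh (r / ρ) / Real.sinh (r / ρ)) * deriv φ r + lam * φ r) := by
    have := heq r hr; push_cast at this ⊢; linarith
  rw [h2]
  field_simp
  ring

lemma REF_key (ρ : ℝ) (hρ : 0 < ρ) (k : ℕ) (hk : 1 ≤ k)
    (lam : ℝ) (φ : ℝ → ℝ)
    (hc : ContinuousOn φ (Set.Ici 0)) (h0 : φ 0 = 1)
    (hd : ∀ r : ℝ, 0 < r → DifferentiableAt ℝ φ r ∧ DifferentiableAt ℝ (deriv φ) r)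
    (heq : ∀ r : ℝ, 0 < r →
      deriv (deriv φ) r
        + ((k : ℝ) / ρ) * (Real.cosh (r / ρ) / Real.sinh (r / ρ)) * deriv φ r
        + lam * φ r = 0) :
    ∀ r : ℝ, 0 < r → (Real.sinh (r/ρ))^k * deriv φ r
      = -lam * ∫ t in (0:ℝ)..r, (Real.sinh (t/ρ))^k * φ t := by
  set g : ℝ → ℝ := fun t => (Real.sinh (t/ρ))^k * φ t with hg_def
  set w : ℝ → ℝ := fun x => (Real.sinh (x/ρ))^k * deriv φ x with hw_def
  have hw : ∀ r : ℝ, 0 < r → HasDerivAt w ((Real.sinh (r/ρ))^k * (-(lam * φ r))) r :=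
    REF_w_deriv ρ hρ k hk lam φ hd heq
  have hgc : ContinuousOn g (Set.Ici 0) :=
    (((Real.continuous_sinh.comp (continuous_id.div_const ρ)).pow k).continuousOn).mul hc
  have hgint : ∀ a b : ℝ, 0 ≤ a → 0 ≤ b → IntervalIntegrable g volume a b := by
    intro a b ha hb
    apply (hgc.mono ?_).intervalIntegrable
    intro t ht
    rcases Set.mem_uIcc.mp ht with h | h
    · exact le_trans ha h.1
    · exact le_trans hb h.1
  have hDC : ContinuousOn (deriv φ) (Set.Ioi 0) :=
    fun r hr => ((hd r hr).2.continuousAt).continuousWithinAt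
  have hftc : ∀ s r : ℝ, 0 < s → 0 < r → w r - w s = -lam * ∫ t in s..r, g t := by
    intro s r hs hr
    have huIcc : Set.uIcc s r ⊆ Set.Ioi 0 := by
      intro t ht
      rcases Set.mem_uIcc.mp ht with h | h
      · exact lt_of_lt_of_le hs h.1
      · exact lt_of_lt_of_le hr h.1
    have heqfun : (fun t => (Real.sinh (t/ρ))^k * (-(lam * φ t))) = fun t => -lam * g t := by
      funext t; simp only [hg_def]; ring
    have hint : IntervalIntegrable (fun t => (Real.sinh (t/ρ))^k * (-(lam * φ t))) volume s r := by
      rw [heqfun]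
      exact (hgint s r hs.le hr.le).const_mul _
    have h1 := intervalIntegral.integral_eq_sub_of_hasDerivAt
      (fun t ht => hw t (huIcc ht)) hint
    rw [heqfun] at h1
    rw [intervalIntegral.integral_const_mul] at h1
    linarith [h1]
  have hsplit : ∀ s r : ℝ, 0 < s → 0 < r →
      (∫ t in (0:ℝ)..s, g t) + ∫ t in s..r, g t = ∫ t in (0:ℝ)..r, g t :=
    fun s r hs hr => intervalIntegral.integral_add_adjacent_intervals
      (hgint 0 s le_rfl hs.le) (hgint s r hs.le hr.le)
  have h0int : Tendsto (fun s => ∫ t in (0:ℝ)..s, g t) (nhdsWithin 0 (Set.Ioi 0)) (nhds 0) := by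
    obtain ⟨Cg, hCg⟩ := (isCompact_Icc (a := (0:ℝ)) (b := 1)).exists_bound_of_continuousOn
      (hgc.mono Set.Icc_subset_Ici_self)
    apply squeeze_zero_norm'
    · filter_upwards [Ioc_mem_nhdsGT_of_mem (Set.mem_Ico.mpr ⟨le_refl 0, zero_lt_one⟩)] with s hs
      calc ‖∫ t in (0:ℝ)..s, g t‖ ≤ Cg * |s - 0| := by
            apply intervalIntegral.norm_integral_le_of_norm_le_const
            intro x hx
            rw [Set.uIoc_of_le hs.1.le] at hx
            exact hCg x ⟨hx.1.le, le_trans hx.2 hs.2⟩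
        _ = Cg * s := by rw [sub_zero, abs_of_pos hs.1]
    · have : Tendsto (fun s : ℝ => Cg * s) (nhds 0) (nhds (Cg * 0)) :=
        (continuous_const.mul continuous_id).tendsto 0
      simpa using this.mono_left nhdsWithin_le_nhds
  have hwlim : ∀ r : ℝ, 0 < r →
      Tendsto w (nhdsWithin 0 (Set.Ioi 0)) (nhds (w r + lam * ∫ t in (0:ℝ)..r, g t)) := by
    intro r hr
    have hev : ∀ᶠ s in nhdsWithin (0:ℝ) (Set.Ioi 0),
        (w r + lam * ∫ t in (0:ℝ)..r, g t) - lam * (∫ t in (0:ℝ)..s, g t) = w s := by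
      filter_upwards [self_mem_nhdsWithin] with s hs
      have h1 := hftc s r hs hr
      have h2 := hsplit s r hs hr
      have h3 : lam * (∫ t in (0:ℝ)..s, g t) + lam * (∫ t in s..r, g t)
          = lam * ∫ t in (0:ℝ)..r, g t := by rw [← mul_add, h2]
      linarith
    have : Tendsto (fun s => (w r + lam * ∫ t in (0:ℝ)..r, g t)
        - lam * (∫ t in (0:ℝ)..s, g t)) (nhdsWithin 0 (Set.Ioi 0))
        (nhds ((w r + lam * ∫ t in (0:ℝ)..r, g t) - lam * 0)) :=
      tendsto_const_nhds.sub (h0int.const_mul lam)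
    rw [mul_zero, sub_zero] at this
    exact Tendsto.congr' hev this
  set L : ℝ := w 1 + lam * ∫ t in (0:ℝ)..1, g t with hLdef
  have hφlim : Tendsto φ (nhdsWithin 0 (Set.Ioi 0)) (nhds 1) := by
    have := (hc 0 Set.self_mem_Ici).tendsto
    rw [h0] at this
    exact this.mono_left (nhdsWithin_mono 0 Set.Ioi_subset_Ici_self)
  have hL0 : L = 0 := by
    by_contra hL
    have hev : ∀ᶠ s in nhdsWithin (0:ℝ) (Set.Ioi 0), |w s - L| < |L|/2 := by
      have h := hwlim 1 one_pos
      rw [← hLdef, Metric.tendsto_nhds] at h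
      simpa [Real.dist_eq] using h (|L|/2) (by positivity)
    rw [eventually_iff, mem_nhdsGT_iff_exists_Ioc_subset] at hev
    obtain ⟨u, hu, hsub⟩ := hev
    set s1 : ℝ := min u (min (ρ/2) 1) with hs1def
    have hs1pos : 0 < s1 := lt_min hu (lt_min (by linarith) one_pos)
    have hs1ρ : s1 ≤ ρ/2 := le_trans (min_le_right _ _) (min_le_left _ _)
    have hs1one : s1 ≤ 1 := le_trans (min_le_right _ _) (min_le_right _ _)
    have hmemw : ∀ s ∈ Set.Ioc (0:ℝ) s1, |w s - L| < |L|/2 := by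
      intro s hs
      exact hsub ⟨hs.1, le_trans hs.2 (min_le_left _ _)⟩
    have hsinhb : ∀ s ∈ Set.Ioc (0:ℝ) s1, (Real.sinh (s/ρ))^k ≤ (2/ρ)^k * s := by
      intro s hs
      have hsρ : 0 ≤ s/ρ := le_of_lt (div_pos hs.1 hρ)
      have hsρ2 : s/ρ ≤ 1/2 := by
        rw [div_le_div_iff₀ hρ (by norm_num)]
        linarith [le_trans hs.2 hs1ρ]
      have h1 : Real.sinh (s/ρ) ≤ 2*(s/ρ) := REF_sinh_le hsρ hsρ2
      have h2 : (Real.sinh (s/ρ))^k ≤ (2*(s/ρ))^k := by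
        apply pow_le_pow_left₀ (Real.sinh_pos_iff.mpr (div_pos hs.1 hρ)).le h1
      have h3 : (2*(s/ρ))^k = (2/ρ)^k * s^k := by
        rw [← mul_pow]; congr 1; field_simp
      have h4 : s^k ≤ s := by
        apply pow_le_of_le_one hs.1.le (le_trans hs.2 hs1one) (by omega)
      calc (Real.sinh (s/ρ))^k ≤ (2/ρ)^k * s^k := by rw [← h3]; exact h2
        _ ≤ (2/ρ)^k * s := by
            apply mul_le_mul_of_nonneg_left h4 (by positivity)
    have hbase : (0:ℝ) < (2/ρ)^k := by positivity
    have hsinhpos : ∀ s ∈ Set.Ioc (0:ℝ) s1, (0:ℝ) < (Real.sinh (s/ρ))^k := by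
      intro s hs
      exact pow_pos (Real.sinh_pos_iff.mpr (div_pos hs.1 hρ)) k
    rcases lt_or_gt_of_ne hL with hLneg | hLpos
    · -- L < 0 : use -φ
      apply REF_no_blowup (fun x => -φ x) ((-L/2) / ((2/ρ)^k)) s1 (-1)
        (div_pos (by linarith) hbase) hs1pos
      · exact fun s hs => ((hd s hs.1).1).neg
      · have : ContinuousOn (fun x => -(deriv φ x)) (Set.Ioc 0 s1) :=
          (hDC.mono (fun t ht => ht.1)).neg
        apply this.congr
        intro x hx
        exact deriv.fun_neg
      · intro s hs
        have hws : w s < L/2 := by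
          have := hmemw s hs
          rw [abs_of_neg hLneg] at this
          cases abs_sub_lt_iff.mp this with
          | intro h1 h2 => linarith
        have hspos := hsinhpos s hs
        have hderiv_eq : deriv φ s = w s / (Real.sinh (s/ρ))^k := by
          rw [hw_def]
          field_simp
        rw [deriv.fun_neg, hderiv_eq]
        have step1 : (-L/2) / ((2/ρ)^k) / s ≤ (-L/2) / ((Real.sinh (s/ρ))^k) := by
          rw [div_div]
          apply div_le_div_of_nonneg_left (by linarith) hspos
          calc (Real.sinh (s/ρ))^k ≤ (2/ρ)^k * s := hsinhb s hs
            _ = (2/ρ)^k * s := rfl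
        have step2 : (-L/2) / ((Real.sinh (s/ρ))^k) ≤ -(w s / (Real.sinh (s/ρ))^k) := by
          rw [← neg_div]
          exact (div_le_div_iff_of_pos_right hspos).mpr (by linarith)
        linarith
      · exact hφlim.neg
    · -- L > 0 : use φ
      apply REF_no_blowup φ ((L/2) / ((2/ρ)^k)) s1 1 (by positivity) hs1pos
      · exact fun s hs => (hd s hs.1).1
      · exact hDC.mono (fun t ht => ht.1)
      · intro s hs
        have hws : L/2 < w s := by
          have := hmemw s hs
          rw [abs_of_pos hLpos] at this
          cases abs_sub_lt_iff.mp this with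
          | intro h1 h2 => linarith
        have hspos := hsinhpos s hs
        have hderiv_eq : deriv φ s = w s / (Real.sinh (s/ρ))^k := by
          rw [hw_def]
          field_simp
        rw [hderiv_eq]
        have step1 : (L/2) / ((2/ρ)^k) / s ≤ (L/2) / ((Real.sinh (s/ρ))^k) := by
          rw [div_div]
          apply div_le_div_of_nonneg_left (by linarith) hspos (hsinhb s hs)
        have step2 : (L/2) / ((Real.sinh (s/ρ))^k) ≤ w s / (Real.sinh (s/ρ))^k := by
          exact (div_le_div_iff_of_pos_right hspos).mpr (by linarith)
        linarith
      · exact hφlim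
  intro r hr
  have huniq := tendsto_nhds_unique (hwlim r hr) (hwlim 1 one_pos)
  rw [← hLdef, hL0] at huniq
  have : w r = -lam * ∫ t in (0:ℝ)..r, g t := by linarith
  exact this

section
variable (ρ : ℝ) (k : ℕ) (lam : ℝ) (φ : ℝ → ℝ)

lemma REF_case_zero (hρ : 0 < ρ) (hk : 1 ≤ k)
    (hc : ContinuousOn φ (Set.Ici 0)) (h0 : φ 0 = 1)
    (hd : ∀ r : ℝ, 0 < r → DifferentiableAt ℝ φ r ∧ DifferentiableAt ℝ (deriv φ) r)
    (hkey : ∀ r : ℝ, 0 < r → (Real.sinh (r/ρ))^k * deriv φ r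
      = -lam * ∫ t in (0:ℝ)..r, (Real.sinh (t/ρ))^k * φ t)
    (hlam : lam = 0) : Tendsto φ atTop (nhds 1) := by
  have hzero : ∀ r : ℝ, 0 < r → deriv φ r = 0 := by
    intro r hr
    have h := hkey r hr
    rw [hlam] at h
    have hs : (Real.sinh (r/ρ))^k ≠ 0 :=
      ne_of_gt (pow_pos (Real.sinh_pos_iff.mpr (div_pos hr hρ)) k)
    simp only [neg_zero, zero_mul] at h
    exact (mul_eq_zero.mp h).resolve_left hs
  have hconst : ∀ a b : ℝ, 0 < a → a ≤ b → φ b = φ a := by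
    intro a b ha hab
    have huIcc : Set.uIcc a b ⊆ Set.Ioi 0 := by
      rw [Set.uIcc_of_le hab]
      exact fun t ht => lt_of_lt_of_le ha ht.1
    have hftc : ∫ t in a..b, (0:ℝ) = φ b - φ a := by
      apply intervalIntegral.integral_eq_sub_of_hasDerivAt
      · intro t ht
        have := (hd t (huIcc ht)).1.hasDerivAt
        rwa [hzero t (huIcc ht)] at this
      · exact intervalIntegrable_const
    simp at hftc
    linarith
  have hφlim : Tendsto φ (nhdsWithin 0 (Set.Ioi 0)) (nhds 1) := by
    have := (hc 0 Set.self_mem_Ici).tendsto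
    rw [h0] at this
    exact this.mono_left (nhdsWithin_mono 0 Set.Ioi_subset_Ici_self)
  have hφ1 : φ 1 = 1 := by
    have hev : ∀ᶠ s in nhdsWithin (0:ℝ) (Set.Ioi 0), φ s = φ 1 := by
      filter_upwards [Ioc_mem_nhdsGT_of_mem (Set.mem_Ico.mpr ⟨le_refl (0:ℝ), zero_lt_one⟩)]
        with s hs
      exact (hconst s 1 hs.1 hs.2).symm
    have h2 : Tendsto (fun _ : ℝ => φ 1) (nhdsWithin 0 (Set.Ioi 0)) (nhds 1) :=
      Tendsto.congr' hev hφlim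
    exact tendsto_nhds_unique tendsto_const_nhds h2
  have hev : ∀ᶠ r in (atTop : Filter ℝ), φ r = 1 := by
    filter_upwards [eventually_ge_atTop (1:ℝ)] with r hr
    rw [hconst 1 r one_pos hr, hφ1]
  exact Tendsto.congr' (hev.mono fun r h => h.symm) tendsto_const_nhds

lemma REF_case_neg (hρ : 0 < ρ) (hk : 1 ≤ k)
    (hc : ContinuousOn φ (Set.Ici 0)) (h0 : φ 0 = 1)
    (hd : ∀ r : ℝ, 0 < r → DifferentiableAt ℝ φ r ∧ DifferentiableAt ℝ (deriv φ) r)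
    (hkey : ∀ r : ℝ, 0 < r → (Real.sinh (r/ρ))^k * deriv φ r
      = -lam * ∫ t in (0:ℝ)..r, (Real.sinh (t/ρ))^k * φ t)
    (hlam : lam < 0) : Tendsto φ atTop atTop := by
  set g : ℝ → ℝ := fun t => (Real.sinh (t/ρ))^k * φ t with hg_def
  have hgc : ContinuousOn g (Set.Ici 0) :=
    (((Real.continuous_sinh.comp (continuous_id.div_const ρ)).pow k).continuousOn).mul hc
  have hgint : ∀ a b : ℝ, 0 ≤ a → 0 ≤ b → IntervalIntegrable g volume a b := by
    intro a b ha hb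
    apply (hgc.mono ?_).intervalIntegrable
    intro t ht
    rcases Set.mem_uIcc.mp ht with h | h
    · exact le_trans ha h.1
    · exact le_trans hb h.1
  have hDC : ContinuousOn (deriv φ) (Set.Ioi 0) :=
    fun r hr => ((hd r hr).2.continuousAt).continuousWithinAt
  have hsinhpos : ∀ r : ℝ, 0 < r → (0:ℝ) < (Real.sinh (r/ρ))^k :=
    fun r hr => pow_pos (Real.sinh_pos_iff.mpr (div_pos hr hρ)) k
  -- positivity of φ
  have hφpos : ∀ r : ℝ, 0 ≤ r → 0 < φ r := by
    by_contra hcon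
    push_neg at hcon
    obtain ⟨b0, hb0, hb0le⟩ := hcon
    set B : Set ℝ := Set.Ici 0 ∩ φ ⁻¹' (Set.Iic 0) with hBdef
    have hBclosed : IsClosed B := hc.preimage_isClosed_of_isClosed isClosed_Ici isClosed_Iic
    have hBne : B.Nonempty := ⟨b0, hb0, hb0le⟩
    have hBbdd : BddBelow B := ⟨0, fun x hx => hx.1⟩
    set b := sInf B with hbdef
    have hbB : b ∈ B := hBclosed.csInf_mem hBne hBbdd
    have hbnonneg : 0 ≤ b := hbB.1
    have hbpos : 0 < b := by
      rcases hbnonneg.lt_or_eq with h | h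
      · exact h
      · exfalso; have := hbB.2; rw [← h, Set.mem_preimage, h0] at this
        simp at this; linarith
    have hlt : ∀ t : ℝ, 0 ≤ t → t < b → 0 < φ t := by
      intro t ht htb
      by_contra h
      push_neg at h
      have : t ∈ B := ⟨ht, h⟩
      exact absurd (csInf_le hBbdd this) (not_le.2 htb)
    have hderivpos : ∀ s ∈ Set.Ioo (0:ℝ) b, 0 < deriv φ s := by
      intro s hs
      have hintpos : 0 < ∫ t in (0:ℝ)..s, g t := by
        apply intervalIntegral.intervalIntegral_pos_of_pos_on (hgint 0 s le_rfl hs.1.le)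
        · intro t ht
          exact mul_pos (hsinhpos t ht.1) (hlt t ht.1.le (lt_trans ht.2 hs.2))
        · exact hs.1
      have h := hkey s hs.1
      have hsp := hsinhpos s hs.1
      have hpos : 0 < -lam * ∫ t in (0:ℝ)..s, g t := mul_pos (by linarith) hintpos
      nlinarith
    have hmono : StrictMonoOn φ (Set.Icc 0 b) := by
      apply strictMonoOn_of_deriv_pos (convex_Icc 0 b) (hc.mono Set.Icc_subset_Ici_self)
      rw [interior_Icc]
      exact hderivpos
    have := hmono (Set.mem_Icc.mpr ⟨le_refl 0, hbpos.le⟩)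
      (Set.mem_Icc.mpr ⟨hbnonneg, le_refl b⟩) hbpos
    rw [h0] at this
    have hble : φ b ≤ 0 := hbB.2
    linarith
  -- positivity of deriv
  have hderivpos : ∀ s : ℝ, 0 < s → 0 < deriv φ s := by
    intro s hs
    have hintpos : 0 < ∫ t in (0:ℝ)..s, g t := by
      apply intervalIntegral.intervalIntegral_pos_of_pos_on (hgint 0 s le_rfl hs.le)
      · exact fun t ht => mul_pos (hsinhpos t ht.1) (hφpos t ht.1.le)
      · exact hs
    have h := hkey s hs
    have hsp := hsinhpos s hs
    have hpos : 0 < -lam * ∫ t in (0:ℝ)..s, g t := mul_pos (by linarith) hintpos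
    nlinarith
  have hmono : StrictMonoOn φ (Set.Ici 0) := by
    apply strictMonoOn_of_deriv_pos (convex_Ici 0) hc
    rw [interior_Ici]
    exact hderivpos
  have hge1 : ∀ r : ℝ, 0 ≤ r → 1 ≤ φ r := by
    intro r hr
    rcases hr.lt_or_eq with h | h
    · have := hmono Set.self_mem_Ici (Set.mem_Ici.mpr hr) h
      rw [h0] at this
      linarith
    · rw [← h, h0]
  -- lower bound for deriv φ at large r
  set c : ℝ := (-lam) * (Real.exp (-(1/ρ))/2)^k with hcdef
  have hcpos : 0 < c := by
    apply mul_pos (by linarith)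
    positivity
  have hlow : ∀ r : ℝ, ρ + 1 ≤ r → c ≤ deriv φ r := by
    intro r hr
    have hr0 : (0:ℝ) < r := by linarith
    have hr1 : (0:ℝ) < r - 1 := by linarith
    have hsinh_int : ∀ a b : ℝ, IntervalIntegrable (fun t => (Real.sinh (t/ρ))^k) volume a b :=
      fun a b => (((Real.continuous_sinh.comp (continuous_id.div_const ρ)).pow k)).intervalIntegrable a b
    have hstep1 : (Real.sinh ((r-1)/ρ))^k ≤ ∫ t in (0:ℝ)..r, g t := by
      have hadd : (∫ t in (0:ℝ)..(r-1), g t) + ∫ t in (r-1)..r, g t = ∫ t in (0:ℝ)..r, g t :=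
        intervalIntegral.integral_add_adjacent_intervals
          (hgint 0 (r-1) le_rfl hr1.le) (hgint (r-1) r hr1.le hr0.le)
      have hnn : 0 ≤ ∫ t in (0:ℝ)..(r-1), g t := by
        apply intervalIntegral.integral_nonneg hr1.le
        intro t ht
        exact mul_nonneg (pow_nonneg (Real.sinh_nonneg_iff.mpr
          (div_nonneg ht.1 hρ.le)) k) (hφpos t ht.1).le
      have hmono_int : ∫ t in (r-1)..r, (Real.sinh (t/ρ))^k ≤ ∫ t in (r-1)..r, g t := by
        apply intervalIntegral.integral_mono_on (by linarith) (hsinh_int _ _)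
          (hgint (r-1) r hr1.le hr0.le)
        intro t ht
        have htpos : (0:ℝ) ≤ t := le_trans hr1.le ht.1
        exact le_mul_of_one_le_right (pow_nonneg (Real.sinh_nonneg_iff.mpr
          (div_nonneg htpos hρ.le)) k) (hge1 t htpos)
      have hconst_int : (Real.sinh ((r-1)/ρ))^k ≤ ∫ t in (r-1)..r, (Real.sinh (t/ρ))^k := by
        have h1 : ∫ t in (r-1)..r, ((Real.sinh ((r-1)/ρ))^k : ℝ)
            ≤ ∫ t in (r-1)..r, (Real.sinh (t/ρ))^k := by
          apply intervalIntegral.integral_mono_on (by linarith) intervalIntegrable_const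
            (hsinh_int _ _)
          intro t ht
          apply pow_le_pow_left₀ (Real.sinh_nonneg_iff.mpr (div_nonneg hr1.le hρ.le))
          exact Real.sinh_le_sinh.mpr ((div_le_div_iff_of_pos_right hρ).mpr ht.1)
        rw [intervalIntegral.integral_const, smul_eq_mul] at h1
        have : (r - (r-1)) = 1 := by ring
        rw [this, one_mul] at h1
        exact h1
      linarith
    -- ratio bound
    have hratio : (Real.exp (-(1/ρ))/2) * Real.sinh (r/ρ) ≤ Real.sinh ((r-1)/ρ) := by
      have hx1 : 1 ≤ (r-1)/ρ := by rw [le_div_iff₀ hρ]; linarith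
      have he2 : (2:ℝ) ≤ Real.exp ((r-1)/ρ) := by
        have h1 : (2:ℝ) ≤ Real.exp 1 := by linarith [Real.add_one_le_exp (1:ℝ)]
        exact le_trans h1 (Real.exp_le_exp.mpr hx1)
      have hsub : Real.exp ((r-1)/ρ) = Real.exp (r/ρ) * Real.exp (-(1/ρ)) := by
        rw [← Real.exp_add]; congr 1; ring
      have ha' : Real.exp (-((r-1)/ρ)) ≤ 1 := Real.exp_le_one_iff.mpr (by linarith)
      have hb' : (0:ℝ) < Real.exp (-(r/ρ)) := Real.exp_pos _
      have hE : (0:ℝ) < Real.exp (-(1/ρ)) := Real.exp_pos _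
      rw [Real.sinh_eq, Real.sinh_eq]
      nlinarith [mul_pos hE hb', hsub, he2, ha']
    have hration : (Real.exp (-(1/ρ))/2)^k * (Real.sinh (r/ρ))^k ≤ (Real.sinh ((r-1)/ρ))^k := by
      rw [← mul_pow]
      apply pow_le_pow_left₀ ?_ hratio
      exact mul_nonneg (by positivity) (Real.sinh_nonneg_iff.mpr (div_nonneg hr0.le hρ.le))
    have hsp := hsinhpos r hr0
    have hchain : c * (Real.sinh (r/ρ))^k ≤ (Real.sinh (r/ρ))^k * deriv φ r := by
      rw [hkey r hr0]
      calc c * (Real.sinh (r/ρ))^k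
          = (-lam) * ((Real.exp (-(1/ρ))/2)^k * (Real.sinh (r/ρ))^k) := by rw [hcdef]; ring
        _ ≤ (-lam) * (Real.sinh ((r-1)/ρ))^k :=
            mul_le_mul_of_nonneg_left hration (by linarith)
        _ ≤ -lam * ∫ t in (0:ℝ)..r, g t :=
            mul_le_mul_of_nonneg_left hstep1 (by linarith)
    have h2 : c * (Real.sinh (r/ρ))^k ≤ deriv φ r * (Real.sinh (r/ρ))^k := by
      linarith [hchain]
    exact le_of_mul_le_mul_right h2 hsp
  -- conclude
  have hgrow : ∀ r : ℝ, ρ + 1 ≤ r → φ (ρ+1) + c * (r - (ρ+1)) ≤ φ r := by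
    intro r hr
    have huIcc : Set.uIcc (ρ+1) r ⊆ Set.Ioi 0 := by
      rw [Set.uIcc_of_le hr]
      exact fun t ht => lt_of_lt_of_le (by linarith) ht.1
    have hint : IntervalIntegrable (deriv φ) volume (ρ+1) r :=
      ((hDC.mono huIcc).mono (by rfl)).intervalIntegrable
    have hftc : ∫ t in (ρ+1)..r, deriv φ t = φ r - φ (ρ+1) := by
      apply intervalIntegral.integral_eq_sub_of_hasDerivAt
      · exact fun t ht => (hd t (huIcc ht)).1.hasDerivAt
      · exact hint
    have hlowint : ∫ t in (ρ+1)..r, (c:ℝ) ≤ ∫ t in (ρ+1)..r, deriv φ t := by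
      apply intervalIntegral.integral_mono_on hr intervalIntegrable_const hint
      intro t ht
      exact hlow t ht.1
    rw [intervalIntegral.integral_const, smul_eq_mul] at hlowint
    linarith
  apply tendsto_atTop_mono' atTop ?_ ?_
  · exact fun r => φ (ρ+1) + c * (r - (ρ+1))
  · filter_upwards [eventually_ge_atTop (ρ+1)] with r hr
    exact hgrow r hr
  · apply tendsto_atTop_add_const_left
    apply Tendsto.const_mul_atTop hcpos
    exact tendsto_atTop_add_const_right _ _ tendsto_id

end

lemma REF_drift (f : ℝ → ℝ) (a R : ℝ) (ha : 0 < a)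
    (hdf : ∀ r : ℝ, R ≤ r → DifferentiableAt ℝ f r)
    (hdc : ContinuousOn (deriv f) (Set.Ici R))
    (hle : ∀ r : ℝ, R ≤ r → deriv f r ≤ -a)
    (hlim : Tendsto f atTop (nhds 0)) : False := by
  have key : ∀ r : ℝ, R ≤ r → f r ≤ f R - a * (r - R) := by
    intro r hr
    have huIcc : Set.uIcc R r ⊆ Set.Ici R := by
      rw [Set.uIcc_of_le hr]; exact fun t ht => ht.1
    have hint : IntervalIntegrable (deriv f) volume R r :=
      (hdc.mono huIcc).intervalIntegrable
    have hftc : ∫ t in R..r, deriv f t = f r - f R := by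
      apply intervalIntegral.integral_eq_sub_of_hasDerivAt
      · exact fun t ht => (hdf t (huIcc ht)).hasDerivAt
      · exact hint
    have hmono : ∫ t in R..r, deriv f t ≤ ∫ t in R..r, (-a : ℝ) := by
      apply intervalIntegral.integral_mono_on hr hint intervalIntegrable_const
      exact fun t ht => hle t ht.1
    rw [intervalIntegral.integral_const, smul_eq_mul] at hmono
    nlinarith
  have h1 : Tendsto f atTop atBot := by
    apply tendsto_atBot_mono' atTop ?_ ?_
    · exact fun r => f R - a * (r - R)
    · filter_upwards [eventually_ge_atTop R] with r hr
      exact key r hr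
    · apply tendsto_atBot_add_const_left
      have h2 : Tendsto (fun r : ℝ => a * (r - R)) atTop atTop :=
        Tendsto.const_mul_atTop ha (tendsto_atTop_add_const_right _ _ tendsto_id)
      exact tendsto_neg_atTop_atBot.comp h2
  exact not_tendsto_atBot_of_tendsto_nhds hlim h1

set_option maxHeartbeats 2000000 in
lemma REF_case_pos (ρ : ℝ) (k : ℕ) (lam : ℝ) (φ : ℝ → ℝ) (hρ : 0 < ρ) (hk : 1 ≤ k)
    (hc : ContinuousOn φ (Set.Ici 0)) (h0 : φ 0 = 1)
    (hd : ∀ r : ℝ, 0 < r → DifferentiableAt ℝ φ r ∧ DifferentiableAt ℝ (deriv φ) r)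
    (heq : ∀ r : ℝ, 0 < r →
      deriv (deriv φ) r
        + ((k : ℝ) / ρ) * (Real.cosh (r / ρ) / Real.sinh (r / ρ)) * deriv φ r
        + lam * φ r = 0) (hlam : 0 < lam) : Tendsto φ atTop (nhds 0) := by
  -- basic continuity facts
  have hφC : ∀ r : ℝ, 0 < r → ContinuousAt φ r := fun r hr => (hd r hr).1.continuousAt
  have hDC : ContinuousOn (deriv φ) (Set.Ioi 0) :=
    fun r hr => ((hd r hr).2.continuousAt).continuousWithinAt
  have hsinhpos : ∀ x : ℝ, 0 < x → 0 < Real.sinh (x/ρ) :=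
    fun x hx => Real.sinh_pos_iff.mpr (div_pos hx hρ)
  have hcoth_mono : ∀ a b : ℝ, 0 < a → a ≤ b →
      Real.cosh (b/ρ) / Real.sinh (b/ρ) ≤ Real.cosh (a/ρ) / Real.sinh (a/ρ) := by
    intro a b ha hab
    have hsa := hsinhpos a ha
    have hsb := hsinhpos b (lt_of_lt_of_le ha hab)
    rw [div_le_div_iff₀ hsb hsa]
    have h1 : 0 ≤ Real.sinh (b/ρ - a/ρ) := Real.sinh_nonneg_iff.mpr
      (by rw [sub_nonneg]; exact (div_le_div_iff_of_pos_right hρ).mpr hab)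
    rw [Real.sinh_sub] at h1
    nlinarith [Real.cosh_pos (a/ρ), Real.cosh_pos (b/ρ)]
  have hcoth_ge1 : ∀ x : ℝ, 0 < x → 1 ≤ Real.cosh (x/ρ) / Real.sinh (x/ρ) := by
    intro x hx
    have hs := hsinhpos x hx
    rw [le_div_iff₀ hs, one_mul]
    have hA := Real.cosh_sub_sinh (x/ρ)
    have hB := Real.exp_pos (-(x/ρ))
    linarith
  have hcoth_pos : ∀ x : ℝ, 0 < x → 0 < Real.cosh (x/ρ) / Real.sinh (x/ρ) :=
    fun x hx => lt_of_lt_of_le one_pos (hcoth_ge1 x hx)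
  -- the energy
  set E : ℝ → ℝ := fun r => (deriv φ r)^2 + lam * (φ r)^2 with hEdef
  have hD2eq : ∀ r : ℝ, 0 < r → deriv (deriv φ) r
      = -(((k:ℝ)/ρ) * (Real.cosh (r/ρ)/Real.sinh (r/ρ)) * deriv φ r + lam * φ r) := by
    intro r hr
    have := heq r hr
    linarith
  have hE : ∀ r : ℝ, 0 < r → HasDerivAt E
      (-(2*((k:ℝ)/ρ)*(Real.cosh (r/ρ)/Real.sinh (r/ρ)))*(deriv φ r)^2) r := by
    intro r hr
    have h1 : HasDerivAt (fun x => (deriv φ x)^2)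
        (2 * deriv φ r * deriv (deriv φ) r) r := by
      have := ((hd r hr).2.hasDerivAt).fun_pow 2
      simpa [mul_comm, mul_assoc] using this
    have h2 : HasDerivAt (fun x => lam * (φ x)^2) (lam * (2 * φ r * deriv φ r)) r := by
      have := (((hd r hr).1.hasDerivAt).fun_pow 2).const_mul lam
      simpa [mul_comm, mul_assoc] using this
    have := h1.fun_add h2
    refine this.congr_deriv ?_
    rw [hD2eq r hr]
    ring
  have hE_cont : ContinuousOn E (Set.Ioi 0) := by
    intro r hr
    apply ContinuousWithinAt.add
    · exact (((hd r hr).2.continuousAt).pow 2).continuousWithinAt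
    · exact (continuousAt_const.mul ((hφC r hr).pow 2)).continuousWithinAt
  have hE_anti : AntitoneOn E (Set.Ioi 0) := by
    apply antitoneOn_of_deriv_nonpos (convex_Ioi 0) hE_cont
    · rw [interior_Ioi]
      exact fun r hr => ((hE r hr).differentiableAt).differentiableWithinAt
    · rw [interior_Ioi]
      intro r hr
      rw [(hE r hr).deriv]
      have h1 := hcoth_pos r hr
      have hkρ : (0:ℝ) ≤ (k:ℝ)/ρ := div_nonneg (Nat.cast_nonneg k) hρ.le
      nlinarith [mul_nonneg (mul_nonneg hkρ h1.le) (sq_nonneg (deriv φ r))]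
  have hE_nonneg : ∀ r : ℝ, 0 ≤ E r :=
    fun r => add_nonneg (sq_nonneg _) (mul_nonneg hlam.le (sq_nonneg _))
  -- limit of E at infinity
  set Ebar : ℝ → ℝ := fun r => E (max 1 r) with hEbardef
  have hEbar_anti : Antitone Ebar := by
    intro a b hab
    exact hE_anti (lt_of_lt_of_le one_pos (le_max_left 1 a))
      (lt_of_lt_of_le one_pos (le_max_left 1 b)) (max_le_max le_rfl hab)
  have hEbar_bdd : BddBelow (Set.range Ebar) := ⟨0, fun x ⟨r, hr⟩ => hr ▸ hE_nonneg _⟩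
  set EInf : ℝ := ⨅ r, Ebar r with hEInfdef
  have hEbar_lim : Tendsto Ebar atTop (nhds EInf) := tendsto_atTop_ciInf hEbar_anti hEbar_bdd
  have hE_lim : Tendsto E atTop (nhds EInf) := by
    apply hEbar_lim.congr'
    filter_upwards [eventually_ge_atTop (1:ℝ)] with r hr
    show E (max 1 r) = E r
    rw [max_eq_right hr]
  have hEInf_nonneg : 0 ≤ EInf := le_ciInf fun r => hE_nonneg _
  have hE_ge : ∀ r : ℝ, 1 ≤ r → EInf ≤ E r := by
    intro r hr
    have h1 := ciInf_le hEbar_bdd r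
    have h2 : Ebar r = E r := by show E (max 1 r) = E r; rw [max_eq_right hr]
    rwa [h2] at h1
  -- uniform bounds for r ≥ 1
  have hEval : ∀ r : ℝ, E r = deriv φ r ^ 2 + lam * φ r ^ 2 := fun r => rfl
  clear_value E
  clear_value Ebar
  clear_value EInf
  set M : ℝ := E 1 with hMdef
  clear_value M
  have hM_nonneg : 0 ≤ M := by rw [hMdef]; exact hE_nonneg 1
  have hE_le : ∀ r : ℝ, 1 ≤ r → E r ≤ M := by
    intro r hr
    rw [hMdef]
    exact hE_anti (Set.mem_Ioi.mpr one_pos)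
      (Set.mem_Ioi.mpr (lt_of_lt_of_le one_pos hr)) hr
  have hklpos : (0:ℝ) < (k:ℝ) := by exact_mod_cast hk
  have hkρ_nonneg : (0:ℝ) ≤ (k:ℝ)/ρ := div_nonneg hklpos.le hρ.le
  have hMD : ∀ r : ℝ, 1 ≤ r → |deriv φ r| ≤ Real.sqrt M := by
    intro r hr
    apply Real.abs_le_sqrt
    nlinarith [hE_le r hr, mul_nonneg hlam.le (sq_nonneg (φ r)), hEval r]
  have hMφ : ∀ r : ℝ, 1 ≤ r → |φ r| ≤ Real.sqrt (M/lam) := by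
    intro r hr
    apply Real.abs_le_sqrt
    rw [le_div_iff₀ hlam]
    nlinarith [hE_le r hr, sq_nonneg (deriv φ r), hEval r]
  set coth1 : ℝ := Real.cosh ((1:ℝ)/ρ) / Real.sinh ((1:ℝ)/ρ) with hcoth1def
  clear_value coth1
  have hcoth1_pos : 0 < coth1 := by rw [hcoth1def]; exact hcoth_pos 1 one_pos
  set M2 : ℝ := ((k:ℝ)/ρ) * coth1 * Real.sqrt M + lam * Real.sqrt (M/lam) + 1 with hM2def
  clear_value M2
  have hM2_pos : 0 < M2 := by
    have h1 : 0 ≤ ((k:ℝ)/ρ) * coth1 * Real.sqrt M :=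
      mul_nonneg (mul_nonneg hkρ_nonneg hcoth1_pos.le) (Real.sqrt_nonneg _)
    have h2 : 0 ≤ lam * Real.sqrt (M/lam) := mul_nonneg hlam.le (Real.sqrt_nonneg _)
    rw [hM2def]
    linarith
  have hD2_bd : ∀ r : ℝ, 1 ≤ r → |deriv (deriv φ) r| ≤ M2 := by
    intro r hr
    have hr0 : (0:ℝ) < r := lt_of_lt_of_le one_pos hr
    rw [hD2eq r hr0, abs_neg]
    have hA_nonneg : (0:ℝ) ≤ ((k:ℝ)/ρ) * (Real.cosh (r/ρ)/Real.sinh (r/ρ)) :=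
      mul_nonneg hkρ_nonneg (hcoth_pos r hr0).le
    have hAle : ((k:ℝ)/ρ) * (Real.cosh (r/ρ)/Real.sinh (r/ρ)) ≤ ((k:ℝ)/ρ) * coth1 := by
      rw [hcoth1def]
      exact mul_le_mul_of_nonneg_left (hcoth_mono 1 r one_pos hr) hkρ_nonneg
    calc |((k:ℝ)/ρ) * (Real.cosh (r/ρ)/Real.sinh (r/ρ)) * deriv φ r + lam * φ r|
        ≤ |((k:ℝ)/ρ) * (Real.cosh (r/ρ)/Real.sinh (r/ρ)) * deriv φ r| + |lam * φ r| :=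
          abs_add_le _ _
      _ = ((k:ℝ)/ρ) * (Real.cosh (r/ρ)/Real.sinh (r/ρ)) * |deriv φ r| + lam * |φ r| := by
          rw [abs_mul (((k:ℝ)/ρ) * (Real.cosh (r/ρ)/Real.sinh (r/ρ))) (deriv φ r),
            abs_mul lam (φ r), abs_of_nonneg hA_nonneg, abs_of_nonneg hlam.le]
      _ ≤ ((k:ℝ)/ρ) * coth1 * Real.sqrt M + lam * Real.sqrt (M/lam) := by
          have h1 := hMD r hr
          have h2 := hMφ r hr
          have h3 := abs_nonneg (deriv φ r)
          nlinarith [mul_le_mul hAle h1 h3 (mul_nonneg hkρ_nonneg hcoth1_pos.le),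
            mul_le_mul_of_nonneg_left h2 hlam.le]
      _ ≤ M2 := by rw [hM2def]; linarith
  -- integrability of D²
  have hIoi : ∀ {a b : ℝ}, 1 ≤ a → 1 ≤ b → Set.uIcc a b ⊆ Set.Ioi 0 := by
    intro a b ha hb t ht
    rcases Set.mem_uIcc.mp ht with h | h
    · exact lt_of_lt_of_le one_pos (le_trans ha h.1)
    · exact lt_of_lt_of_le one_pos (le_trans hb h.1)
  have hsq_int : ∀ a b : ℝ, 1 ≤ a → 1 ≤ b →
      IntervalIntegrable (fun t => (deriv φ t)^2) volume a b := by
    intro a b ha hb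
    exact ((hDC.mono (hIoi ha hb)).pow 2).intervalIntegrable
  have hcoth_cont : ContinuousOn (fun t : ℝ => Real.cosh (t/ρ)/Real.sinh (t/ρ)) (Set.Ioi 0) := by
    apply ContinuousOn.div
      ((Real.continuous_cosh.comp (continuous_id.div_const ρ)).continuousOn)
      ((Real.continuous_sinh.comp (continuous_id.div_const ρ)).continuousOn)
    exact fun t ht => ne_of_gt (hsinhpos t ht)
  have hG_bound : ∀ b : ℝ, 1 ≤ b →
      (2*((k:ℝ)/ρ)) * ∫ t in (1:ℝ)..b, (deriv φ t)^2 ≤ M := by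
    intro b hb
    have huIcc := hIoi le_rfl hb
    have hcontEint : ContinuousOn
        (fun t => (2*((k:ℝ)/ρ)*(Real.cosh (t/ρ)/Real.sinh (t/ρ)))*(deriv φ t)^2)
        (Set.uIcc 1 b) :=
      (continuousOn_const.mul (hcoth_cont.mono huIcc)).mul ((hDC.mono huIcc).pow 2)
    have hintE : IntervalIntegrable
        (fun t => -(2*((k:ℝ)/ρ)*(Real.cosh (t/ρ)/Real.sinh (t/ρ)))*(deriv φ t)^2) volume 1 b := by
      have : (fun t => -(2*((k:ℝ)/ρ)*(Real.cosh (t/ρ)/Real.sinh (t/ρ)))*(deriv φ t)^2)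
          = fun t => -((2*((k:ℝ)/ρ)*(Real.cosh (t/ρ)/Real.sinh (t/ρ)))*(deriv φ t)^2) := by
        funext t; ring
      rw [this]
      exact (hcontEint.neg).intervalIntegrable
    have hftc : ∫ t in (1:ℝ)..b,
        (-(2*((k:ℝ)/ρ)*(Real.cosh (t/ρ)/Real.sinh (t/ρ)))*(deriv φ t)^2) = E b - E 1 :=
      intervalIntegral.integral_eq_sub_of_hasDerivAt (fun t ht => hE t (huIcc ht)) hintE
    have hneg : ∫ t in (1:ℝ)..b,
        ((2*((k:ℝ)/ρ)*(Real.cosh (t/ρ)/Real.sinh (t/ρ)))*(deriv φ t)^2) = E 1 - E b := by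
      have h1 : (fun t => (2*((k:ℝ)/ρ)*(Real.cosh (t/ρ)/Real.sinh (t/ρ)))*(deriv φ t)^2)
          = fun t => -((-(2*((k:ℝ)/ρ)*(Real.cosh (t/ρ)/Real.sinh (t/ρ))))*(deriv φ t)^2) := by
        funext t; ring
      rw [h1, intervalIntegral.integral_neg, hftc]
      ring
    have hintc : IntervalIntegrable
        (fun t => (2*((k:ℝ)/ρ))*(deriv φ t)^2) volume 1 b :=
      (hsq_int 1 b le_rfl hb).const_mul _
    have hintE' : IntervalIntegrable
        (fun t => (2*((k:ℝ)/ρ)*(Real.cosh (t/ρ)/Real.sinh (t/ρ)))*(deriv φ t)^2) volume 1 b :=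
      hcontEint.intervalIntegrable
    have hmono : ∫ t in (1:ℝ)..b, (2*((k:ℝ)/ρ))*(deriv φ t)^2
        ≤ ∫ t in (1:ℝ)..b, (2*((k:ℝ)/ρ)*(Real.cosh (t/ρ)/Real.sinh (t/ρ)))*(deriv φ t)^2 := by
      apply intervalIntegral.integral_mono_on hb hintc hintE'
      intro t ht
      have ht0 : (0:ℝ) < t := lt_of_lt_of_le one_pos ht.1
      have := hcoth_ge1 t ht0
      nlinarith [sq_nonneg (deriv φ t), mul_nonneg (mul_nonneg (by linarith : (0:ℝ) ≤ 2*((k:ℝ)/ρ)) (by linarith : (0:ℝ) ≤ Real.cosh (t/ρ)/Real.sinh (t/ρ) - 1)) (sq_nonneg (deriv φ t))]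
    rw [intervalIntegral.integral_const_mul] at hmono
    have hEb := hE_nonneg b
    rw [hneg] at hmono
    rw [hMdef]
    have hfin : (2*((k:ℝ)/ρ)) * (∫ x in (1:ℝ)..b, (deriv φ x)^2) ≤ E 1 := by linarith
    exact hfin
  have h2kρ_pos : (0:ℝ) < 2*((k:ℝ)/ρ) := by positivity
  have hGle : ∀ b : ℝ, 1 ≤ b →
      ∫ t in (1:ℝ)..b, (deriv φ t)^2 ≤ M / (2*((k:ℝ)/ρ)) := by
    intro b hb
    rw [le_div_iff₀ h2kρ_pos]
    have := hG_bound b hb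
    linarith [this]
  set G : ℝ → ℝ := fun r => ∫ t in (1:ℝ)..(max 1 r), (deriv φ t)^2 with hGdef
  have hGval : ∀ r : ℝ, G r = ∫ t in (1:ℝ)..(max 1 r), (deriv φ t)^2 := fun r => rfl
  clear_value G
  have hG_mono : Monotone G := by
    intro a b hab
    have h1 : (1:ℝ) ≤ max 1 a := le_max_left _ _
    have h2 : (1:ℝ) ≤ max 1 b := le_max_left _ _
    have hadd := intervalIntegral.integral_add_adjacent_intervals
      (hsq_int 1 (max 1 a) le_rfl h1) (hsq_int (max 1 a) (max 1 b) h1 h2)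
    have hnn : 0 ≤ ∫ t in (max 1 a)..(max 1 b), (deriv φ t)^2 :=
      intervalIntegral.integral_nonneg (max_le_max le_rfl hab) (fun t _ => sq_nonneg _)
    rw [hGval a, hGval b]
    linarith
  have hG_bdd : BddAbove (Set.range G) := by
    refine ⟨M / (2*((k:ℝ)/ρ)), ?_⟩
    rintro x ⟨r, rfl⟩
    rw [hGval r]
    exact hGle (max 1 r) (le_max_left _ _)
  set Gsup : ℝ := ⨆ r, G r with hGsupdef
  clear_value Gsup
  have hG_lim : Tendsto G atTop (nhds Gsup) := by
    rw [hGsupdef]; exact tendsto_atTop_ciSup hG_mono hG_bdd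
  -- Barbalat: deriv φ → 0
  have hD_to_0 : Tendsto (deriv φ) atTop (nhds 0) := by
    by_contra hcon
    rw [Metric.tendsto_nhds] at hcon
    push_neg at hcon
    obtain ⟨ε, hε, hfreq⟩ := hcon
    set δ : ℝ := ε/(2*M2) with hδdef
    clear_value δ
    have hδpos : 0 < δ := by rw [hδdef]; exact div_pos hε (by linarith)
    have key : ∀ r : ℝ, 1 ≤ r → ε ≤ |deriv φ r| → δ*(ε^2/4) ≤ G (r+δ) - G r := by
      intro r hr hDr
      have hr0 : (0:ℝ) < r := lt_of_lt_of_le one_pos hr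
      have hrδ : (1:ℝ) ≤ r + δ := by linarith
      have hmr : max 1 r = r := max_eq_right hr
      have hmrδ : max 1 (r+δ) = r + δ := max_eq_right hrδ
      have hGdiff : G (r+δ) - G r = ∫ t in r..(r+δ), (deriv φ t)^2 := by
        have hadd := intervalIntegral.integral_add_adjacent_intervals
          (hsq_int 1 r le_rfl hr) (hsq_int r (r+δ) hr hrδ)
        rw [hGval (r+δ), hGval r, hmr, hmrδ]
        linarith
      have hDlower : ∀ t ∈ Set.Icc r (r+δ), ε/2 ≤ |deriv φ t| := by
        intro t ht
        have hdist : ‖deriv φ t - deriv φ r‖ ≤ M2 * ‖t - r‖ := by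
          apply Convex.norm_image_sub_le_of_norm_deriv_le
            (f := deriv φ) (s := Set.Icc r (r+δ))
            (fun x hx => (hd x (lt_of_lt_of_le hr0 hx.1)).2)
            (fun x hx => by rw [Real.norm_eq_abs]; exact hD2_bd x (le_trans hr hx.1))
            (convex_Icc _ _) (Set.left_mem_Icc.mpr (by linarith)) ht
        rw [Real.norm_eq_abs, Real.norm_eq_abs] at hdist
        have h1 : |t - r| ≤ δ := by
          rw [abs_of_nonneg (by linarith [ht.1])]
          linarith [ht.2]
        have h2 : M2 * |t - r| ≤ ε/2 := by
          have := mul_le_mul_of_nonneg_left h1 hM2_pos.le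
          have hM2δ : M2 * δ = ε/2 := by
            rw [hδdef]; field_simp
          linarith
        have h3 := abs_sub_abs_le_abs_sub (deriv φ r) (deriv φ t)
        rw [abs_sub_comm (deriv φ r) (deriv φ t)] at h3
        linarith
      have hlowint : ∫ t in r..(r+δ), (ε^2/4 : ℝ) ≤ ∫ t in r..(r+δ), (deriv φ t)^2 := by
        apply intervalIntegral.integral_mono_on (by linarith) intervalIntegrable_const
          (hsq_int r (r+δ) hr hrδ)
        intro t ht
        have := hDlower t ht
        nlinarith [abs_nonneg (deriv φ t), sq_abs (deriv φ t)]
      rw [intervalIntegral.integral_const, smul_eq_mul] at hlowint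
      rw [hGdiff]
      have : (r + δ - r) = δ := by ring
      rw [this] at hlowint
      linarith
    have hev0 : Tendsto (fun r => G (r+δ) - G r) atTop (nhds 0) := by
      have h1 : Tendsto (fun r => G (r+δ)) atTop (nhds Gsup) :=
        hG_lim.comp (tendsto_atTop_add_const_right atTop δ tendsto_id)
      have := h1.sub hG_lim
      simpa using this
    have hev : ∀ᶠ r in atTop, G (r+δ) - G r < δ*(ε^2/4) :=
      hev0.eventually_lt_const (by positivity)
    have hfreq2 : ∃ᶠ r in atTop, ε ≤ |deriv φ r| := by
      apply hfreq.mono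
      intro r hr2
      rw [Real.dist_eq, sub_zero] at hr2
      linarith [hr2]
    obtain ⟨r, hrε, hr1, hrlt⟩ :=
      (hfreq2.and_eventually ((eventually_ge_atTop (1:ℝ)).and hev)).exists
    linarith [key r hr1 hrε]
  -- EInf = 0
  have hD2C : ContinuousOn (deriv (deriv φ)) (Set.Ioi 0) := by
    have hφCIoi : ContinuousOn φ (Set.Ioi 0) := fun r hr => (hφC r hr).continuousWithinAt
    apply ContinuousOn.congr
      (f := fun r => -(((k:ℝ)/ρ)*(Real.cosh (r/ρ)/Real.sinh (r/ρ))*deriv φ r + lam * φ r))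
      (((continuousOn_const.mul hcoth_cont).mul hDC).add
        (continuousOn_const.mul hφCIoi)).neg
    exact fun r hr => hD2eq r hr
  have hEInf0 : EInf = 0 := by
    by_contra hne
    have hEpos : 0 < EInf := hEInf_nonneg.lt_of_ne (Ne.symm hne)
    set δ0 : ℝ := Real.sqrt (EInf/(2*lam)) with hδ0def
    clear_value δ0
    have hδ0pos : 0 < δ0 := by rw [hδ0def]; exact Real.sqrt_pos.mpr (by positivity)
    have hD2small : ∀ᶠ r in atTop, (deriv φ r)^2 < EInf/2 := by
      have h1 : Tendsto (fun r => (deriv φ r)^2) atTop (nhds 0) := by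
        have := hD_to_0.pow 2
        simpa using this
      exact h1.eventually_lt_const (by positivity)
    obtain ⟨R1, hR1⟩ := eventually_atTop.mp (hD2small.and (eventually_ge_atTop (1:ℝ)))
    set R1' : ℝ := max R1 1 with hR1'def
    have hR1'ge1 : (1:ℝ) ≤ R1' := le_max_right _ _
    have hR1'pos : (0:ℝ) < R1' := lt_of_lt_of_le one_pos hR1'ge1
    have hφlower : ∀ r : ℝ, R1' ≤ r → δ0 ≤ |φ r| := by
      intro r hr
      obtain ⟨h1, h2⟩ := hR1 r (le_trans (le_max_left _ _) hr)
      have h3 := hE_ge r h2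
      have h4 : EInf/(2*lam) ≤ (φ r)^2 := by
        rw [div_le_iff₀ (by positivity)]
        nlinarith [hEval r]
      calc δ0 ≤ Real.sqrt ((φ r)^2) := by rw [hδ0def]; exact Real.sqrt_le_sqrt h4
        _ = |φ r| := Real.sqrt_sq_eq_abs _
    have hsign : (∀ r : ℝ, R1' ≤ r → δ0 ≤ φ r) ∨ (∀ r : ℝ, R1' ≤ r → φ r ≤ -δ0) := by
      rcases le_or_gt δ0 (φ R1') with hp | hn
      · left
        intro r hr
        rcases le_abs.mp (hφlower r hr) with h | h
        · exact h
        · exfalso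
          have hcont : ContinuousOn φ (Set.Icc R1' r) :=
            hc.mono (fun t ht => le_trans hR1'pos.le ht.1)
          have h0mem : (0:ℝ) ∈ Set.Icc (φ r) (φ R1') := ⟨by linarith, by linarith⟩
          obtain ⟨t, ht, hφt⟩ := intermediate_value_Icc' hr hcont h0mem
          have := hφlower t ht.1
          rw [hφt, abs_zero] at this
          linarith
      · right
        have hfirst : φ R1' ≤ -δ0 := by
          rcases le_abs.mp (hφlower R1' le_rfl) with h | h
          · linarith
          · linarith
        intro r hr
        rcases le_abs.mp (hφlower r hr) with h | h
        · exfalso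
          have hcont : ContinuousOn φ (Set.Icc R1' r) :=
            hc.mono (fun t ht => le_trans hR1'pos.le ht.1)
          have h0mem : (0:ℝ) ∈ Set.Icc (φ R1') (φ r) := ⟨by linarith, by linarith⟩
          obtain ⟨t, ht, hφt⟩ := intermediate_value_Icc hr hcont h0mem
          have := hφlower t ht.1
          rw [hφt, abs_zero] at this
          linarith
        · linarith
    set κ : ℝ := ((k:ℝ)/ρ)*coth1 with hκdef
    clear_value κ
    have hκ_nonneg : 0 ≤ κ := by rw [hκdef]; exact mul_nonneg hkρ_nonneg hcoth1_pos.le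
    have hDsmall : ∀ᶠ r in atTop, κ*|deriv φ r| ≤ lam*δ0/2 := by
      have hb : (0:ℝ) < (lam*δ0/2)/(κ+1) := by positivity
      have h1 : ∀ᶠ r in atTop, |deriv φ r| < (lam*δ0/2)/(κ+1) := by
        have h2 : Tendsto (fun r => |deriv φ r|) atTop (nhds 0) := by
          have := hD_to_0.abs
          simpa using this
        exact h2.eventually_lt_const hb
      filter_upwards [h1] with r hr
      have h3 : κ*|deriv φ r| ≤ (κ+1)*((lam*δ0/2)/(κ+1)) := by
        apply mul_le_mul (by linarith) hr.le (abs_nonneg _) (by linarith)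
      have h4 : (κ+1)*((lam*δ0/2)/(κ+1)) = lam*δ0/2 := by
        rw [mul_comm]
        exact div_mul_cancel₀ _ (by positivity)
      linarith
    obtain ⟨R3, hR3⟩ := eventually_atTop.mp hDsmall
    set R4 : ℝ := max R1' R3 with hR4def
    have hR4pos : (0:ℝ) < R4 := lt_of_lt_of_le hR1'pos (le_max_left _ _)
    have hAbound : ∀ r : ℝ, R4 ≤ r →
        -(lam*δ0/2) ≤ ((k:ℝ)/ρ)*(Real.cosh (r/ρ)/Real.sinh (r/ρ))*deriv φ r ∧
        ((k:ℝ)/ρ)*(Real.cosh (r/ρ)/Real.sinh (r/ρ))*deriv φ r ≤ lam*δ0/2 := by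
      intro r hr
      have hr1 : (1:ℝ) ≤ r := le_trans (le_trans hR1'ge1 (le_max_left _ _)) hr
      have hr0 : (0:ℝ) < r := lt_of_lt_of_le one_pos hr1
      have hA_nonneg : (0:ℝ) ≤ ((k:ℝ)/ρ) * (Real.cosh (r/ρ)/Real.sinh (r/ρ)) :=
        mul_nonneg hkρ_nonneg (hcoth_pos r hr0).le
      have hAle : ((k:ℝ)/ρ) * (Real.cosh (r/ρ)/Real.sinh (r/ρ)) ≤ κ := by
        rw [hκdef, hcoth1def]
        exact mul_le_mul_of_nonneg_left (hcoth_mono 1 r one_pos hr1) hkρ_nonneg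
      have habs : |((k:ℝ)/ρ)*(Real.cosh (r/ρ)/Real.sinh (r/ρ))*deriv φ r| ≤ lam*δ0/2 := by
        rw [abs_mul, abs_of_nonneg hA_nonneg]
        have h5 := hR3 r (le_trans (le_max_right _ _) hr)
        have h6 : ((k:ℝ)/ρ)*(Real.cosh (r/ρ)/Real.sinh (r/ρ))*|deriv φ r| ≤ κ*|deriv φ r| :=
          mul_le_mul_of_nonneg_right hAle (abs_nonneg _)
        linarith
      constructor
      · linarith [neg_abs_le (((k:ℝ)/ρ)*(Real.cosh (r/ρ)/Real.sinh (r/ρ))*deriv φ r)]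
      · linarith [le_abs_self (((k:ℝ)/ρ)*(Real.cosh (r/ρ)/Real.sinh (r/ρ))*deriv φ r)]
    have hIciR4 : Set.Ici R4 ⊆ Set.Ioi 0 := fun t ht => lt_of_lt_of_le hR4pos ht
    rcases hsign with hpos | hneg
    · apply REF_drift (deriv φ) (lam*δ0/2) R4 (by positivity)
        (fun r hr => (hd r (hIciR4 hr)).2) (hD2C.mono hIciR4)
        ?_ hD_to_0
      intro r hr
      have hr0 : (0:ℝ) < r := hIciR4 hr
      rw [hD2eq r hr0]
      have h1 := (hAbound r hr).1
      have h2 : lam * δ0 ≤ lam * φ r :=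
        mul_le_mul_of_nonneg_left (hpos r (le_trans (le_max_left _ _) hr)) hlam.le
      linarith
    · apply REF_drift (fun x => -(deriv φ x)) (lam*δ0/2) R4 (by positivity)
        (fun r hr => ((hd r (hIciR4 hr)).2).neg)
        ?_ ?_ ?_
      · have h1 : ContinuousOn (fun r => -(deriv (deriv φ) r)) (Set.Ici R4) :=
          (hD2C.mono hIciR4).neg
        apply h1.congr
        intro x _
        exact deriv.fun_neg
      · intro r hr
        rw [deriv.fun_neg]
        have hr0 : (0:ℝ) < r := hIciR4 hr
        rw [hD2eq r hr0]
        have h1 := (hAbound r hr).2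
        have h2 : lam * φ r ≤ lam * (-δ0) :=
          mul_le_mul_of_nonneg_left (hneg r (le_trans (le_max_left _ _) hr)) hlam.le
        have h3 : lam * (-δ0) = -(lam*δ0) := by ring
        rw [h3] at h2
        linarith
      · have := hD_to_0.neg
        simpa using this
  -- conclusion: squeeze
  have hbound : ∀ᶠ r in atTop, ‖φ r‖ ≤ Real.sqrt (E r / lam) := by
    filter_upwards [eventually_ge_atTop (1:ℝ)] with r hr
    rw [Real.norm_eq_abs]
    apply Real.abs_le_sqrt
    rw [le_div_iff₀ hlam]
    nlinarith [sq_nonneg (deriv φ r), hEval r, hE_le r hr]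
  apply squeeze_zero_norm' hbound
  have hlim2 : Tendsto (fun r => Real.sqrt (E r / lam)) atTop (nhds (Real.sqrt (EInf/lam))) :=
    (Real.continuous_sqrt.tendsto _).comp (hE_lim.div_const lam)
  rw [hEInf0] at hlim2
  simpa using hlim2


/-- Behavior at infinity of a normalized radial eigenfunction with real eigenvalue `λ`:
`φ(r) → +∞` if `λ < 0`, `φ(r) → 1` if `λ = 0`, and `φ(r) → 0` if `λ > 0`. -/
theorem radial_eigenfunction_behavior_at_infinity
    (ρ : ℝ) (hρ : 0 < ρ) (k : ℕ) (hk : 1 ≤ k)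
    (lam : ℝ) (φ : ℝ → ℝ)
    (hc : ContinuousOn φ (Set.Ici 0)) (h0 : φ 0 = 1)
    (hd : ∀ r : ℝ, 0 < r → DifferentiableAt ℝ φ r ∧ DifferentiableAt ℝ (deriv φ) r)
    (heq : ∀ r : ℝ, 0 < r →
      deriv (deriv φ) r
        + ((k : ℝ) / ρ) * (Real.cosh (r / ρ) / Real.sinh (r / ρ)) * deriv φ r
        + lam * φ r = 0) :
    (lam < 0 → Tendsto φ atTop atTop)
    ∧ (lam = 0 → Tendsto φ atTop (nhds 1))
    ∧ (0 < lam → Tendsto φ atTop (nhds 0)) := by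
  have hkey := REF_key ρ hρ k hk lam φ hc h0 hd heq
  refine ⟨?_, ?_, ?_⟩
  · intro hlam
    exact REF_case_neg ρ k lam φ hρ hk hc h0 hd hkey hlam
  · intro hlam
    exact REF_case_zero ρ k lam φ hρ hk hc h0 hd hkey hlam
  · intro hlam
    exact REF_case_pos ρ k lam φ hρ hk hc h0 hd heq hlam
end
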